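/- In every stochastic reachability game with partial observation on both sides, every initial distribution δ ∈ Δ(K) is either almost-surely winning for player 1 or positively winning for player 2, and not both. -/

import Mathlib

open scoped Classical

noncomputable section

/-- A probability distribution on a finite type, given by a nonnegative
real-valued density summing to `1`. -/
structure FDist (X : Type*) [Fintype X] where
  f : X → ℝ
  nonneg : ∀ x, 0 ≤ f x
  sum_one : ∑ x, f x = 1

/-- The support of a distribution: the set of points with positive probability. -/
def FDist.support {X : Type*} [Fintype X] (δ : FDist X) : Finset X :=
  Finset.univ.filter fun x => 0 < δ.f x

/-- The uniform distribution on a nonempty finite set. -/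
def uniform {X : Type*} [Fintype X] (L : Finset X) (hL : L.Nonempty) : FDist X where
  f x := if x ∈ L then (L.card : ℝ)⁻¹ else 0
  nonneg x := by split_ifs <;> positivity
  sum_one := by
    rw [Finset.sum_ite_mem, Finset.univ_inter, Finset.sum_const, nsmul_eq_mul,
      mul_inv_cancel₀]
    exact_mod_cast (Finset.card_pos.mpr hL).ne'

/-- Uniform distribution on `L`, defaulting to the uniform distribution on the
whole type when `L` is empty. -/
def uniformD {X : Type*} [Fintype X] [Nonempty X] (L : Finset X) : FDist X :=
  if h : L.Nonempty then uniform L h else uniform Finset.univ Finset.univ_nonempty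

/-- The Dirac distribution on a point. -/
def dirac {X : Type*} [Fintype X] (x : X) : FDist X where
  f y := if y = x then 1 else 0
  nonneg y := by by_cases h : y = x <;> simp [h]
  sum_one := by simp

/-- A stochastic game with partial observation on both sides and a reachability
objective for player 1: states `K`, actions `I`, `J`, signals `C`, `D`, target
states `T`, transition probabilities `p`, and actions encoded in signals via
`act₁`, `act₂`. -/
structure Game (K I J C D : Type*) [Fintype K] [Fintype I] [Fintype J] [Fintype C] [Fintype D] where
  T : Finset K
  p : K → I → J → C × D × K → ℝ
  p_nonneg : ∀ k i j x, 0 ≤ p k i j x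
  p_sum : ∀ k i j, ∑ x : C × D × K, p k i j x = 1
  act₁ : C → I
  act₂ : D → J
  act_compat : ∀ k i j c d l, 0 < p k i j (c, d, l) → i = act₁ c ∧ j = act₂ d

/-- A (behavioral) strategy of player 1: a distribution on actions for each
finite sequence of received signals. -/
abbrev Strategy1 (I C : Type*) [Fintype I] : Type _ := List C → FDist I

/-- A (behavioral) strategy of player 2. -/
abbrev Strategy2 (J D : Type*) [Fintype J] : Type _ := List D → FDist J

/-- A play with `n+1` states: the initial state followed by `n` steps, each
consisting of a signal for player 1, a signal for player 2 and the next state. -/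
structure Hist (K C D : Type*) (n : ℕ) where
  first : K
  steps : Fin n → C × D × K

instance (K C D : Type*) [Fintype K] [Fintype C] [Fintype D] (n : ℕ) :
    Fintype (Hist K C D n) :=
  Fintype.ofEquiv (K × (Fin n → C × D × K))
    { toFun := fun x => ⟨x.1, x.2⟩
      invFun := fun h => (h.first, h.steps)
      left_inv := fun _ => rfl
      right_inv := fun _ => rfl }

namespace Hist

variable {K C D : Type*}

/-- The last state of a play. -/
def last : ∀ {n : ℕ}, Hist K C D n → K
  | 0, h => h.first
  | n + 1, h => (h.steps (Fin.last n)).2.2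

/-- The play obtained by removing the last step. -/
def init {n : ℕ} (h : Hist K C D (n + 1)) : Hist K C D n :=
  ⟨h.first, fun m => h.steps m.castSucc⟩

/-- The `m`-th state of a play, `0`-indexed: `state h 0` is the initial state
(called `k₁` in `1`-indexed notation). -/
def state {n : ℕ} (h : Hist K C D n) (m : Fin (n + 1)) : K :=
  if hm : m.val = 0 then h.first
  else (h.steps ⟨m.val - 1, by have := m.isLt; omega⟩).2.2

/-- The sequence of signals received by player 1 along the play. -/
def sig1 {n : ℕ} (h : Hist K C D n) : List C := List.ofFn fun m => (h.steps m).1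

/-- The sequence of signals received by player 2 along the play. -/
def sig2 {n : ℕ} (h : Hist K C D n) : List D := List.ofFn fun m => (h.steps m).2.1

/-- The play visits the target set `T`. -/
def visits (T : Finset K) {n : ℕ} (h : Hist K C D n) : Prop :=
  ∃ m : Fin (n + 1), h.state m ∈ T

end Hist

namespace Game

variable {K I J C D : Type*} [Fintype K] [Fintype I] [Fintype J] [Fintype C] [Fintype D]

/-- The probability of a given play of `n` steps, under initial distribution `δ`
and strategies `σ`, `τ`. -/
def playProb (G : Game K I J C D) (δ : FDist K) (σ : Strategy1 I C) (τ : Strategy2 J D) :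
    ∀ n : ℕ, Hist K C D n → ℝ
  | 0, h => δ.f h.first
  | n + 1, h =>
      G.playProb δ σ τ n h.init *
        ∑ i : I, ∑ j : J,
          (σ h.init.sig1).f i * (τ h.init.sig2).f j *
            G.p h.init.last i j (h.steps (Fin.last n))

/-- The probability that a play with `n+1` states visits the target set. -/
def reachProb (G : Game K I J C D) (δ : FDist K) (σ : Strategy1 I C)
    (τ : Strategy2 J D) (n : ℕ) : ℝ :=
  ∑ h : Hist K C D n, if h.visits G.T then G.playProb δ σ τ n h else 0

/-- The reachability probability `γ₁(δ,σ,τ)`: the supremum over horizons of the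
probability that the play visits the target set. -/
def val (G : Game K I J C D) (δ : FDist K) (σ : Strategy1 I C) (τ : Strategy2 J D) : ℝ :=
  ⨆ n : ℕ, G.reachProb δ σ τ n

/-- `δ` is almost-surely winning for player 1. -/
def AlmostSureWin1 (G : Game K I J C D) (δ : FDist K) : Prop :=
  ∃ σ, ∀ τ, G.val δ σ τ = 1

/-- `δ` is positively winning for player 1. -/
def PositiveWin1 (G : Game K I J C D) (δ : FDist K) : Prop :=
  ∃ σ, ∀ τ, 0 < G.val δ σ τ

/-- `δ` is positively winning for player 2. -/
def PositiveWin2 (G : Game K I J C D) (δ : FDist K) : Prop :=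
  ∃ τ, ∀ σ, G.val δ σ τ < 1

/-- `δ` is surely (equivalently here, almost-surely) winning for player 2. -/
def SureWin2 (G : Game K I J C D) (δ : FDist K) : Prop :=
  ∃ τ, ∀ σ, G.val δ σ τ = 0

/-- One-step belief operator of player 1. -/
def B1 (G : Game K I J C D) (L : Finset K) (c : C) : Finset K :=
  Finset.univ.filter fun k => ∃ l ∈ L, ∃ d : D, 0 < G.p l (G.act₁ c) (G.act₂ d) (c, d, k)

/-- One-step belief operator of player 2. -/
def B2 (G : Game K I J C D) (L : Finset K) (d : D) : Finset K :=
  Finset.univ.filter fun k => ∃ l ∈ L, ∃ c : C, 0 < G.p l (G.act₁ c) (G.act₂ d) (c, d, k)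

/-- Belief of player 1 after a sequence of signals. -/
def B1seq (G : Game K I J C D) (L : Finset K) (cs : List C) : Finset K := cs.foldl G.B1 L

/-- Belief of player 2 after a sequence of signals. -/
def B2seq (G : Game K I J C D) (L : Finset K) (ds : List D) : Finset K := ds.foldl G.B2 L

/-- One-step pessimistic belief operator of player 1. -/
def B1p (G : Game K I J C D) (L : Finset K) (c : C) : Finset K := G.B1 (L \ G.T) c

/-- One-step pessimistic belief operator of player 2. -/
def B2p (G : Game K I J C D) (L : Finset K) (d : D) : Finset K := G.B2 (L \ G.T) d

/-- Pessimistic belief of player 1 after a sequence of signals. -/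
def B1pseq (G : Game K I J C D) (L : Finset K) (cs : List C) : Finset K := cs.foldl G.B1p L

/-- Pessimistic belief of player 2 after a sequence of signals. -/
def B2pseq (G : Game K I J C D) (L : Finset K) (ds : List D) : Finset K := ds.foldl G.B2p L

/-- The operator `Φ` on collections of subsets of `K ∖ T`. -/
def Phi (G : Game K I J C D) (𝓛 : Set (Finset K)) : Set (Finset K) :=
  {L | L ∈ 𝓛 ∧ L ∩ G.T = ∅ ∧ ∃ j : J, ∀ d : D, G.act₂ d = j → G.B2 L d ∈ 𝓛}

theorem Phi_mono (G : Game K I J C D) : Monotone G.Phi := by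
  intro A B hAB L hL
  obtain ⟨h1, h2, j, hj⟩ := hL
  exact ⟨hAB h1, h2, j, fun d hd => hAB (hj d hd)⟩

/-- `𝓛_∞`, the greatest fixpoint of `Φ`. -/
def Linf (G : Game K I J C D) : Set (Finset K) :=
  OrderHom.gfp ⟨G.Phi, G.Phi_mono⟩

/-- The winning condition of the `𝓛`-game for player 1, on a play with initial
support `L`: some state `k_m` is a target state and all earlier pessimistic
beliefs of player 1 avoid `𝓛`. -/
def LWin (G : Game K I J C D) (𝓛 : Set (Finset K)) (L : Finset K) {n : ℕ}
    (h : Hist K C D n) : Prop :=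
  ∃ m : Fin (n + 1), h.state m ∈ G.T ∧
    ∀ r : ℕ, 1 ≤ r → r ≤ m.val → G.B1pseq L (h.sig1.take r) ∉ 𝓛

/-- The payoff `γ₁^𝓛(δ,σ,τ)` of player 1 in the `𝓛`-game, for an initial
distribution `δ` with support `L`. -/
def Lval (G : Game K I J C D) (𝓛 : Set (Finset K)) (L : Finset K) (δ : FDist K)
    (σ : Strategy1 I C) (τ : Strategy2 J D) : ℝ :=
  ⨆ n : ℕ, ∑ h : Hist K C D n, if G.LWin 𝓛 L h then G.playProb δ σ τ n h else 0

end Game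

/-- The uniformly random strategy `σ_R` of player 1. -/
def randomStrat (I C : Type*) [Fintype I] [Nonempty I] : Strategy1 I C :=
  fun _ => uniform Finset.univ Finset.univ_nonempty
variable {K I J C D : Type*} [Fintype K] [Fintype I] [Fintype J] [Fintype C] [Fintype D]
  [Nonempty K] [Nonempty I] [Nonempty J] [Nonempty C] [Nonempty D]


/-! ### Auxiliary development for the proof -/

section Aux
set_option linter.unusedSectionVars false
set_option linter.deprecated false

lemma FDist.exists_pos {X : Type*} [Fintype X] (δ : FDist X) : ∃ x, 0 < δ.f x := by
  by_contra h
  push_neg at h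
  have : ∑ x, δ.f x ≤ 0 := Finset.sum_nonpos (fun x _ => h x)
  rw [δ.sum_one] at this; linarith

lemma FDist.f_le_one {X : Type*} [Fintype X] (δ : FDist X) (x : X) : δ.f x ≤ 1 := by
  have h1 : ∑ y, δ.f y = 1 := δ.sum_one
  have : δ.f x ≤ ∑ y, δ.f y :=
    Finset.single_le_sum (fun y _ => δ.nonneg y) (Finset.mem_univ x)
  linarith

lemma FDist.support_nonempty {X : Type*} [Fintype X] (δ : FDist X) : δ.support.Nonempty := by
  obtain ⟨x, hx⟩ := δ.exists_pos
  exact ⟨x, Finset.mem_filter.2 ⟨Finset.mem_univ x, hx⟩⟩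

lemma FDist.mem_support {X : Type*} [Fintype X] (δ : FDist X) (x : X) :
    x ∈ δ.support ↔ 0 < δ.f x := by
  simp [FDist.support]

lemma uniform_f_pos {X : Type*} [Fintype X] {L : Finset X} (hL : L.Nonempty) {x : X}
    (hx : x ∈ L) : 0 < (uniform L hL).f x := by
  simp only [uniform, if_pos hx]
  have : (0:ℝ) < L.card := by exact_mod_cast Finset.card_pos.2 hL
  positivity

lemma uniform_f_inv_le {X : Type*} [Fintype X] {L : Finset X} (hL : L.Nonempty) {x : X}
    (hx : x ∈ L) : ((Fintype.card X : ℝ))⁻¹ ≤ (uniform L hL).f x := by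
  simp only [uniform, if_pos hx]
  have h1 : (0:ℝ) < L.card := by exact_mod_cast Finset.card_pos.2 hL
  have h2 : (L.card : ℝ) ≤ Fintype.card X := by
    exact_mod_cast Finset.card_le_card (Finset.subset_univ L)
  have h0 : (0:ℝ) < Fintype.card X := lt_of_lt_of_le h1 h2
  exact inv_anti₀ h1 h2

lemma uniformD_f_pos_of_mem {X : Type*} [Fintype X] [Nonempty X] {L : Finset X} {x : X}
    (hx : x ∈ L) : 0 < (uniformD L).f x := by
  rw [uniformD, dif_pos ⟨x, hx⟩]
  exact uniform_f_pos _ hx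

lemma uniformD_f_pos_of_empty {X : Type*} [Fintype X] [Nonempty X] {L : Finset X}
    (hL : ¬ L.Nonempty) (x : X) : 0 < (uniformD L).f x := by
  rw [uniformD, dif_neg hL]
  exact uniform_f_pos _ (Finset.mem_univ x)

lemma mem_of_uniformD_f_pos {X : Type*} [Fintype X] [Nonempty X] {L : Finset X} {x : X}
    (hL : L.Nonempty) (hx : 0 < (uniformD L).f x) : x ∈ L := by
  rw [uniformD, dif_pos hL] at hx
  by_contra hmem
  simp only [uniform, if_neg hmem] at hx
  exact lt_irrefl _ hx

lemma uniformD_f_inv_le {X : Type*} [Fintype X] [Nonempty X] {L : Finset X} {x : X}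
    (hx : 0 < (uniformD L).f x) : ((Fintype.card X : ℝ))⁻¹ ≤ (uniformD L).f x := by
  unfold uniformD at hx ⊢
  split_ifs at hx ⊢ with h
  · refine uniform_f_inv_le _ ?_
    by_contra hmem
    simp only [uniform, if_neg hmem] at hx
    exact lt_irrefl _ hx
  · exact uniform_f_inv_le _ (Finset.mem_univ x)

lemma dirac_f_pos_iff {X : Type*} [Fintype X] {x y : X} : 0 < (dirac x).f y ↔ y = x := by
  constructor
  · intro h
    by_contra hne
    simp [dirac, hne] at h
  · intro h; simp [dirac, h]

namespace Hist

variable {n : ℕ}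

/-- Extend a play by one step. -/
def extend (h : Hist K C D n) (x : C × D × K) : Hist K C D (n + 1) :=
  ⟨h.first, Fin.snoc h.steps x⟩

@[simp] lemma extend_first (h : Hist K C D n) (x : C × D × K) :
    (h.extend x).first = h.first := rfl

@[simp] lemma extend_init (h : Hist K C D n) (x : C × D × K) :
    (h.extend x).init = h := by
  cases h with
  | mk f st =>
    unfold extend init
    simp only [Hist.mk.injEq, true_and]
    exact funext fun m => by simp [Fin.snoc_castSucc]

@[simp] lemma extend_steps_last (h : Hist K C D n) (x : C × D × K) :
    (h.extend x).steps (Fin.last n) = x := by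
  simp [extend]

@[simp] lemma extend_last (h : Hist K C D n) (x : C × D × K) :
    (h.extend x).last = x.2.2 := by
  simp [last, extend]

lemma eta (h : Hist K C D (n + 1)) : h.init.extend (h.steps (Fin.last n)) = h := by
  cases h with
  | mk f st =>
    unfold extend init
    simp only [Hist.mk.injEq, true_and]
    exact Fin.snoc_init_self st

@[simp] lemma sig1_length (h : Hist K C D n) : h.sig1.length = n := by simp [sig1]

@[simp] lemma sig2_length (h : Hist K C D n) : h.sig2.length = n := by simp [sig2]

lemma extend_sig1 (h : Hist K C D n) (x : C × D × K) :
    (h.extend x).sig1 = h.sig1 ++ [x.1] := by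
  simp only [sig1, extend]
  rw [List.ofFn_succ']
  rw [List.concat_eq_append]
  congr 1
  · congr 1
    funext i
    rw [Fin.snoc_castSucc]
  · rw [Fin.snoc_last]

lemma extend_sig2 (h : Hist K C D n) (x : C × D × K) :
    (h.extend x).sig2 = h.sig2 ++ [x.2.1] := by
  simp only [sig2, extend]
  rw [List.ofFn_succ']
  rw [List.concat_eq_append]
  congr 1
  · congr 1
    funext i
    rw [Fin.snoc_castSucc]
  · rw [Fin.snoc_last]

@[simp] lemma state_zero (h : Hist K C D n) : h.state 0 = h.first := by simp [state]

lemma state_last (h : Hist K C D n) : h.state (Fin.last n) = h.last := by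
  cases n with
  | zero => simp [state, last, Fin.last]
  | succ m =>
    simp only [state, last, Fin.last]
    rw [dif_neg (by omega)]
    have he : (⟨m + 1 - 1, by omega⟩ : Fin (m+1)) = ⟨m, by omega⟩ := Fin.ext (by simp)
    rw [he]

lemma extend_state_castSucc (h : Hist K C D n) (x : C × D × K) (m : Fin (n + 1)) :
    (h.extend x).state m.castSucc = h.state m := by
  simp only [state, extend, Fin.coe_castSucc]
  by_cases hm : (m : ℕ) = 0
  · rw [dif_pos hm, dif_pos hm]
  · rw [dif_neg hm, dif_neg hm]
    have hlt : (m : ℕ) - 1 < n := by have := m.isLt; omega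
    have : (⟨(m:ℕ) - 1, by omega⟩ : Fin (n+1)) = Fin.castSucc ⟨(m:ℕ)-1, hlt⟩ := rfl
    rw [this, Fin.snoc_castSucc]

lemma extend_state_last (h : Hist K C D n) (x : C × D × K) :
    (h.extend x).state (Fin.last (n + 1)) = x.2.2 := by
  simp only [state, extend, Fin.last]
  rw [dif_neg (by omega)]
  have : (⟨n + 1 - 1, by omega⟩ : Fin (n+1)) = Fin.last n := rfl
  rw [this, Fin.snoc_last]

lemma visits_extend {T : Finset K} (h : Hist K C D n) (x : C × D × K) :
    (h.extend x).visits T ↔ h.visits T ∨ x.2.2 ∈ T := by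
  constructor
  · rintro ⟨m, hm⟩
    rcases Fin.eq_castSucc_or_eq_last m with ⟨m', rfl⟩ | rfl
    · rw [extend_state_castSucc] at hm
      exact Or.inl ⟨m', hm⟩
    · rw [extend_state_last] at hm
      exact Or.inr hm
  · rintro (⟨m, hm⟩ | hx)
    · exact ⟨m.castSucc, by rwa [extend_state_castSucc]⟩
    · exact ⟨Fin.last _, by rwa [extend_state_last]⟩

lemma visits_of_last_mem {T : Finset K} (h : Hist K C D n) (hl : h.last ∈ T) :
    h.visits T := ⟨Fin.last n, by rwa [state_last]⟩

lemma last_not_mem_of_not_visits {T : Finset K} (h : Hist K C D n) (hv : ¬ h.visits T) :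
    h.last ∉ T := fun hl => hv (visits_of_last_mem h hl)

lemma visits_zero_iff {T : Finset K} (h : Hist K C D 0) : h.visits T ↔ h.first ∈ T := by
  constructor
  · rintro ⟨m, hm⟩
    have : m = 0 := Fin.ext (by omega)
    subst this; rwa [state_zero] at hm
  · intro h1; exact ⟨0, by rwa [state_zero]⟩

end Hist

/-- `Hist (n+1)` is equivalent to `Hist n × (C × D × K)`. -/
def histSuccEquiv (n : ℕ) : Hist K C D (n + 1) ≃ (Hist K C D n) × (C × D × K) where
  toFun h := (h.init, h.steps (Fin.last n))
  invFun p := p.1.extend p.2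
  left_inv h := Hist.eta h
  right_inv p := by
    cases p with
    | mk h x => simp

lemma sum_hist_succ (n : ℕ) (f : Hist K C D (n + 1) → ℝ) :
    ∑ h : Hist K C D (n+1), f h
      = ∑ h : Hist K C D n, ∑ x : C × D × K, f (h.extend x) := by
  rw [← Finset.sum_product']
  exact Fintype.sum_equiv (histSuccEquiv n) _ _ (fun h => by
    simp only [histSuccEquiv, Equiv.coe_fn_mk]
    rw [Hist.eta])

/-- `Hist 0` is equivalent to `K`. -/
def histZeroEquiv : Hist K C D 0 ≃ K where
  toFun h := h.first
  invFun k := ⟨k, Fin.elim0⟩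
  left_inv h := by
    cases h with
    | mk f s =>
      simp only [Hist.mk.injEq, true_and]
      exact funext fun i => i.elim0
  right_inv k := rfl

lemma sum_hist_zero (f : Hist K C D 0 → ℝ) :
    ∑ h : Hist K C D 0, f h = ∑ k : K, f ⟨k, Fin.elim0⟩ :=
  Fintype.sum_equiv histZeroEquiv _ _ (fun h => by
    cases h with
    | mk f' s =>
      congr 2
      exact funext fun i => i.elim0)

end Aux

section Aux2
set_option linter.unusedSectionVars false
set_option maxHeartbeats 1000000

lemma pos_pair {a b : ℝ} (ha : 0 ≤ a) (hb : 0 ≤ b) (h : 0 < a * b) : 0 < a ∧ 0 < b := by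
  constructor
  · rcases lt_or_eq_of_le ha with h' | h'
    · exact h'
    · exfalso; rw [← h'] at h; simp at h
  · rcases lt_or_eq_of_le hb with h' | h'
    · exact h'
    · exfalso; rw [← h'] at h; simp at h

@[simp] lemma dirac_f_self {X : Type*} [Fintype X] (k : X) : (dirac k).f k = 1 := by
  simp [dirac]

lemma dirac_f_ne {X : Type*} [Fintype X] {k k' : X} (h : k' ≠ k) : (dirac k).f k' = 0 := by
  simp [dirac, h]

/-- Shift a function on lists by a prefix. -/
def shifted {X : Type*} {Y : Sort*} (u : List X → Y) (pre : List X) : List X → Y :=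
  fun l => u (pre ++ l)

@[simp] lemma shifted_nil {X : Type*} {Y : Sort*} (u : List X → Y) : shifted u [] = u := rfl

lemma shifted_shifted {X : Type*} {Y : Sort*} (u : List X → Y) (pre pre' : List X) :
    shifted (shifted u pre) pre' = shifted u (pre ++ pre') := by
  funext l; simp [shifted, List.append_assoc]

/-- Product of the probabilities assigned by `u` to the actions determined (via `a`)
by the successive elements of a list. -/
def gList {X Y : Type*} [Fintype Y] (u : List X → FDist Y) (a : X → Y) : List X → ℝ
  | [] => 1
  | x :: l => (u []).f (a x) * gList (shifted u [x]) a l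

@[simp] lemma gList_nil {X Y : Type*} [Fintype Y] (u : List X → FDist Y) (a : X → Y) :
    gList u a [] = 1 := rfl

lemma gList_cons {X Y : Type*} [Fintype Y] (u : List X → FDist Y) (a : X → Y) (x : X)
    (l : List X) : gList u a (x :: l) = (u []).f (a x) * gList (shifted u [x]) a l := rfl

lemma gList_append {X Y : Type*} [Fintype Y] (a : X → Y) :
    ∀ (l₁ l₂ : List X) (u : List X → FDist Y),
      gList u a (l₁ ++ l₂) = gList u a l₁ * gList (shifted u l₁) a l₂ := by
  intro l₁
  induction l₁ with
  | nil => intro l₂ u; simp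
  | cons x l₁ ih =>
    intro l₂ u
    rw [List.cons_append, gList_cons, gList_cons, ih, shifted_shifted]
    rw [show [x] ++ l₁ = x :: l₁ from rfl, mul_assoc]

lemma gList_snoc {X Y : Type*} [Fintype Y] (u : List X → FDist Y) (a : X → Y) (l : List X)
    (x : X) : gList u a (l ++ [x]) = gList u a l * (u l).f (a x) := by
  rw [gList_append]
  congr 1
  rw [gList_cons, gList_nil, mul_one]
  show (u (l ++ [])).f (a x) = _
  rw [List.append_nil]

lemma gList_nonneg {X Y : Type*} [Fintype Y] (a : X → Y) :
    ∀ (l : List X) (u : List X → FDist Y), 0 ≤ gList u a l := by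
  intro l
  induction l with
  | nil => intro u; simp
  | cons x l ih => intro u; exact mul_nonneg ((u []).nonneg _) (ih _)

lemma gList_le_one {X Y : Type*} [Fintype Y] (a : X → Y) :
    ∀ (l : List X) (u : List X → FDist Y), gList u a l ≤ 1 := by
  intro l
  induction l with
  | nil => intro u; simp
  | cons x l ih =>
    intro u
    calc (u []).f (a x) * gList (shifted u [x]) a l ≤ 1 * 1 := by
          apply mul_le_mul ((u []).f_le_one _) (ih _) (gList_nonneg _ _ _) zero_le_one
      _ = 1 := by ring

@[simp] lemma Hist.sig1_zero (h : Hist K C D 0) : h.sig1 = [] := by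
  simp [Hist.sig1]

@[simp] lemma Hist.sig2_zero (h : Hist K C D 0) : h.sig2 = [] := by
  simp [Hist.sig2]

@[simp] lemma Hist.last_zero (h : Hist K C D 0) : h.last = h.first := rfl

@[simp] lemma Hist.init_first {n : ℕ} (h : Hist K C D (n+1)) : h.init.first = h.first := rfl

namespace Game

variable (G : Game K I J C D)

lemma p_eq_zero {k : K} {i : I} {j : J} {c : C} {d : D} {l : K}
    (h : i ≠ G.act₁ c ∨ j ≠ G.act₂ d) : G.p k i j (c, d, l) = 0 := by
  rcases lt_or_eq_of_le (G.p_nonneg k i j (c, d, l)) with hp | hp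
  · obtain ⟨h1, h2⟩ := G.act_compat k i j c d l hp
    rcases h with h | h
    · exact absurd h1 h
    · exact absurd h2 h
  · exact hp.symm

lemma step_collapse (k : K) (a : I → ℝ) (b : J → ℝ) (c : C) (d : D) (l : K) :
    ∑ i : I, ∑ j : J, a i * b j * G.p k i j (c, d, l)
      = a (G.act₁ c) * b (G.act₂ d) * G.p k (G.act₁ c) (G.act₂ d) (c, d, l) := by
  rw [Finset.sum_eq_single (G.act₁ c)]
  · rw [Finset.sum_eq_single (G.act₂ d)]
    · intro j _ hj
      rw [G.p_eq_zero (Or.inr hj), mul_zero]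
    · intro hd; exact absurd (Finset.mem_univ _) hd
  · intro i _ hi
    apply Finset.sum_eq_zero
    intro j _
    rw [G.p_eq_zero (Or.inl hi), mul_zero]
  · intro hd; exact absurd (Finset.mem_univ _) hd

lemma playProb_extend (δ : FDist K) (σ : Strategy1 I C) (τ : Strategy2 J D) (n : ℕ)
    (h : Hist K C D n) (x : C × D × K) :
    G.playProb δ σ τ (n+1) (h.extend x)
      = G.playProb δ σ τ n h *
          ((σ h.sig1).f (G.act₁ x.1) * (τ h.sig2).f (G.act₂ x.2.1) *
            G.p h.last (G.act₁ x.1) (G.act₂ x.2.1) x) := by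
  obtain ⟨c, d, l⟩ := x
  show G.playProb δ σ τ n (h.extend (c,d,l)).init * _ = _
  rw [Hist.extend_init, Hist.extend_steps_last]
  congr 1
  exact G.step_collapse h.last (fun i => (σ h.sig1).f i) (fun j => (τ h.sig2).f j) c d l

lemma playProb_nonneg (δ : FDist K) (σ : Strategy1 I C) (τ : Strategy2 J D) :
    ∀ (n : ℕ) (h : Hist K C D n), 0 ≤ G.playProb δ σ τ n h := by
  intro n
  induction n with
  | zero => intro h; exact δ.nonneg _
  | succ n ih =>
    intro h
    show 0 ≤ G.playProb δ σ τ n h.init * _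
    apply mul_nonneg (ih _)
    apply Finset.sum_nonneg; intro i _
    apply Finset.sum_nonneg; intro j _
    apply mul_nonneg (mul_nonneg ((σ _).nonneg _) ((τ _).nonneg _)) (G.p_nonneg _ _ _ _)

lemma sum_extend_playProb (δ : FDist K) (σ : Strategy1 I C) (τ : Strategy2 J D) (n : ℕ)
    (h : Hist K C D n) :
    ∑ x : C × D × K, G.playProb δ σ τ (n+1) (h.extend x) = G.playProb δ σ τ n h := by
  have : ∀ x : C × D × K, G.playProb δ σ τ (n+1) (h.extend x)
      = G.playProb δ σ τ n h * ∑ i : I, ∑ j : J,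
          (σ h.sig1).f i * (τ h.sig2).f j * G.p h.last i j x := by
    intro x
    show G.playProb δ σ τ n (h.extend x).init * _ = _
    rw [Hist.extend_init, Hist.extend_steps_last]
  rw [Finset.sum_congr rfl (fun x _ => this x), ← Finset.mul_sum]
  have key : ∀ (i : I) (j : J), (∑ x : C × D × K,
      (σ h.sig1).f i * (τ h.sig2).f j * G.p h.last i j x)
      = (σ h.sig1).f i * (τ h.sig2).f j := by
    intro i j
    rw [← Finset.mul_sum, G.p_sum, mul_one]
  have swap : (∑ x : C × D × K, ∑ i : I, ∑ j : J,
      (σ h.sig1).f i * (τ h.sig2).f j * G.p h.last i j x) = 1 := by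
    rw [Finset.sum_comm]
    have : ∀ i : I, (∑ x : C × D × K, ∑ j : J,
        (σ h.sig1).f i * (τ h.sig2).f j * G.p h.last i j x)
        = (σ h.sig1).f i := by
      intro i
      rw [Finset.sum_comm]
      have h2 : (∑ j : J, ∑ x : C × D × K,
          (σ h.sig1).f i * (τ h.sig2).f j * G.p h.last i j x)
          = ∑ j : J, (σ h.sig1).f i * (τ h.sig2).f j :=
        Finset.sum_congr rfl (fun j _ => key i j)
      rw [h2, ← Finset.mul_sum, (τ h.sig2).sum_one, mul_one]
    rw [Finset.sum_congr rfl (fun i _ => this i), (σ h.sig1).sum_one]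
  rw [swap, mul_one]

end Game

end Aux2

section Aux3
set_option linter.unusedSectionVars false
set_option maxHeartbeats 1000000

namespace Game

variable (G : Game K I J C D)

end Game

/-- The strategy-free part of the probability of a play: initial weight times
transition probabilities. -/
def Game.F0' (G : Game K I J C D) (δ : FDist K) : ∀ n : ℕ, Hist K C D n → ℝ
  | 0, h => δ.f h.first
  | n + 1, h =>
      G.F0' δ n h.init *
        G.p h.init.last (G.act₁ (h.steps (Fin.last n)).1) (G.act₂ (h.steps (Fin.last n)).2.1)
          (h.steps (Fin.last n))

namespace Game

variable (G : Game K I J C D)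

lemma F0'_extend (δ : FDist K) (n : ℕ) (h : Hist K C D n) (x : C × D × K) :
    G.F0' δ (n+1) (h.extend x)
      = G.F0' δ n h * G.p h.last (G.act₁ x.1) (G.act₂ x.2.1) x := by
  show G.F0' δ n (h.extend x).init * _ = _
  rw [Hist.extend_init, Hist.extend_steps_last]

lemma F0'_nonneg (δ : FDist K) : ∀ (n : ℕ) (h : Hist K C D n), 0 ≤ G.F0' δ n h := by
  intro n
  induction n with
  | zero => intro h; exact δ.nonneg _
  | succ n ih =>
    intro h
    exact mul_nonneg (ih _) (G.p_nonneg _ _ _ _)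

lemma playProb_factor (δ : FDist K) (σ : Strategy1 I C) (τ : Strategy2 J D) :
    ∀ (n : ℕ) (h : Hist K C D n),
      G.playProb δ σ τ n h
        = G.F0' δ n h * gList σ G.act₁ h.sig1 * gList τ G.act₂ h.sig2 := by
  intro n
  induction n with
  | zero =>
    intro h
    show δ.f h.first = _
    rw [Hist.sig1_zero, Hist.sig2_zero, gList_nil, gList_nil]
    show δ.f h.first = G.F0' δ 0 h * 1 * 1
    show δ.f h.first = δ.f h.first * 1 * 1
    ring
  | succ n ih =>
    intro h
    rw [← Hist.eta h]
    rw [G.playProb_extend, G.F0'_extend, ih, Hist.extend_sig1, Hist.extend_sig2,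
      gList_snoc, gList_snoc]
    ring

lemma sum_playProb (δ : FDist K) (σ : Strategy1 I C) (τ : Strategy2 J D) :
    ∀ n : ℕ, ∑ h : Hist K C D n, G.playProb δ σ τ n h = 1 := by
  intro n
  induction n with
  | zero =>
    rw [sum_hist_zero]
    exact δ.sum_one
  | succ n ih =>
    rw [sum_hist_succ]
    rw [Finset.sum_congr rfl (fun h _ => G.sum_extend_playProb δ σ τ n h)]
    exact ih

/-- Probability that the play of length `n+1` avoids the target set entirely. -/
def noTmass (δ : FDist K) (σ : Strategy1 I C) (τ : Strategy2 J D) (n : ℕ) : ℝ :=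
  ∑ h : Hist K C D n, if h.visits G.T then 0 else G.playProb δ σ τ n h

lemma noTmass_nonneg (δ : FDist K) (σ : Strategy1 I C) (τ : Strategy2 J D) (n : ℕ) :
    0 ≤ G.noTmass δ σ τ n := by
  apply Finset.sum_nonneg
  intro h _
  split_ifs
  · exact le_refl 0
  · exact G.playProb_nonneg δ σ τ n h

lemma reachProb_add_noTmass (δ : FDist K) (σ : Strategy1 I C) (τ : Strategy2 J D) (n : ℕ) :
    G.reachProb δ σ τ n + G.noTmass δ σ τ n = 1 := by
  rw [reachProb, noTmass, ← Finset.sum_add_distrib]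
  rw [← G.sum_playProb δ σ τ n]
  apply Finset.sum_congr rfl
  intro h _
  split_ifs <;> ring

lemma reachProb_nonneg (δ : FDist K) (σ : Strategy1 I C) (τ : Strategy2 J D) (n : ℕ) :
    0 ≤ G.reachProb δ σ τ n := by
  apply Finset.sum_nonneg
  intro h _
  split_ifs
  · exact G.playProb_nonneg δ σ τ n h
  · exact le_refl 0

lemma reachProb_le_one (δ : FDist K) (σ : Strategy1 I C) (τ : Strategy2 J D) (n : ℕ) :
    G.reachProb δ σ τ n ≤ 1 := by
  have h1 := G.reachProb_add_noTmass δ σ τ n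
  have h2 := G.noTmass_nonneg δ σ τ n
  linarith

lemma noTmass_le_one (δ : FDist K) (σ : Strategy1 I C) (τ : Strategy2 J D) (n : ℕ) :
    G.noTmass δ σ τ n ≤ 1 := by
  have h1 := G.reachProb_add_noTmass δ σ τ n
  have h2 := G.reachProb_nonneg δ σ τ n
  linarith

lemma noTmass_succ_le (δ : FDist K) (σ : Strategy1 I C) (τ : Strategy2 J D) (n : ℕ) :
    G.noTmass δ σ τ (n+1) ≤ G.noTmass δ σ τ n := by
  rw [noTmass, noTmass, sum_hist_succ]
  apply Finset.sum_le_sum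
  intro h _
  by_cases hv : h.visits G.T
  · rw [if_pos hv]
    apply le_of_eq
    apply Finset.sum_eq_zero
    intro x _
    rw [if_pos ((Hist.visits_extend h x).2 (Or.inl hv))]
  · rw [if_neg hv]
    calc (∑ x : C × D × K, if (h.extend x).visits G.T then 0
            else G.playProb δ σ τ (n+1) (h.extend x))
        ≤ ∑ x : C × D × K, G.playProb δ σ τ (n+1) (h.extend x) := by
          apply Finset.sum_le_sum
          intro x _
          split_ifs
          · exact G.playProb_nonneg δ σ τ _ _
          · exact le_refl _
      _ = G.playProb δ σ τ n h := G.sum_extend_playProb δ σ τ n h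

lemma noTmass_antitone (δ : FDist K) (σ : Strategy1 I C) (τ : Strategy2 J D) {m n : ℕ}
    (hmn : m ≤ n) : G.noTmass δ σ τ n ≤ G.noTmass δ σ τ m := by
  induction n with
  | zero => rw [Nat.le_zero.1 hmn]
  | succ n ih =>
    rcases Nat.lt_or_ge m (n+1) with h | h
    · exact le_trans (G.noTmass_succ_le δ σ τ n) (ih (Nat.lt_succ_iff.1 h))
    · rw [Nat.le_antisymm hmn h]

lemma bddAbove_reachProb (δ : FDist K) (σ : Strategy1 I C) (τ : Strategy2 J D) :
    BddAbove (Set.range fun n => G.reachProb δ σ τ n) := by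
  refine ⟨1, ?_⟩
  rintro x ⟨n, rfl⟩
  exact G.reachProb_le_one δ σ τ n

lemma reachProb_le_val (δ : FDist K) (σ : Strategy1 I C) (τ : Strategy2 J D) (n : ℕ) :
    G.reachProb δ σ τ n ≤ G.val δ σ τ :=
  le_ciSup (G.bddAbove_reachProb δ σ τ) n

lemma val_le_one (δ : FDist K) (σ : Strategy1 I C) (τ : Strategy2 J D) :
    G.val δ σ τ ≤ 1 :=
  ciSup_le (fun n => G.reachProb_le_one δ σ τ n)

lemma val_lt_one_of_noTmass (δ : FDist K) (σ : Strategy1 I C) (τ : Strategy2 J D)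
    {c : ℝ} (hc : 0 < c) (h : ∀ n, c ≤ G.noTmass δ σ τ n) : G.val δ σ τ < 1 := by
  have : G.val δ σ τ ≤ 1 - c := by
    apply ciSup_le
    intro n
    have := G.reachProb_add_noTmass δ σ τ n
    have := h n
    linarith
  linarith

lemma val_eq_one_of_noTmass (δ : FDist K) (σ : Strategy1 I C) (τ : Strategy2 J D)
    (h : ∀ ε : ℝ, 0 < ε → ∃ n, G.noTmass δ σ τ n ≤ ε) : G.val δ σ τ = 1 := by
  refine le_antisymm (G.val_le_one δ σ τ) ?_
  by_contra hlt
  push_neg at hlt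
  obtain ⟨n, hn⟩ := h ((1 - G.val δ σ τ) / 2) (by linarith)
  have h1 := G.reachProb_add_noTmass δ σ τ n
  have h2 := G.reachProb_le_val δ σ τ n
  linarith

end Game

end Aux3

section Aux4
set_option linter.unusedSectionVars false
set_option maxHeartbeats 1000000

namespace Hist

variable {n m : ℕ}

/-- Glue a block of extra steps at the end of a play. -/
def glue (h : Hist K C D n) (s : Fin m → C × D × K) : Hist K C D (n + m) :=
  ⟨h.first, Fin.append h.steps s⟩

/-- The tail part of a glued play, viewed as a play starting at `h.last`. -/
def tailHist (h : Hist K C D n) (s : Fin m → C × D × K) : Hist K C D m :=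
  ⟨h.last, s⟩

@[simp] lemma glue_zero (h : Hist K C D n) (s : Fin 0 → C × D × K) : h.glue s = h := by
  cases h with
  | mk f st =>
    unfold glue
    simp only [Hist.mk.injEq, true_and]
    rw [Fin.append_right_nil _ _ rfl]
    funext i
    exact congrArg st (Fin.ext rfl)

lemma glue_snoc (h : Hist K C D n) (s : Fin m → C × D × K) (x : C × D × K) :
    h.glue (Fin.snoc s x) = (h.glue s).extend x := by
  unfold glue extend
  simp only [Hist.mk.injEq, true_and]
  exact Fin.append_snoc _ _ _

@[simp] lemma tailHist_first (h : Hist K C D n) (s : Fin m → C × D × K) :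
    (h.tailHist s).first = h.last := rfl

lemma tailHist_snoc (h : Hist K C D n) (s : Fin m → C × D × K) (x : C × D × K) :
    h.tailHist (Fin.snoc s x) = (h.tailHist s).extend x := rfl

lemma glue_last (h : Hist K C D n) :
    ∀ {m : ℕ} (s : Fin m → C × D × K), (h.glue s).last = (h.tailHist s).last := by
  intro m
  induction m with
  | zero => intro s; rw [glue_zero]; rfl
  | succ m ih =>
    intro s
    rw [← Fin.snoc_init_self s, glue_snoc, tailHist_snoc, extend_last, extend_last]

lemma glue_sig1 (h : Hist K C D n) :
    ∀ {m : ℕ} (s : Fin m → C × D × K), (h.glue s).sig1 = h.sig1 ++ (h.tailHist s).sig1 := by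
  intro m
  induction m with
  | zero => intro s; rw [glue_zero, sig1_zero, List.append_nil]
  | succ m ih =>
    intro s
    rw [← Fin.snoc_init_self s, glue_snoc, tailHist_snoc, extend_sig1, extend_sig1, ih,
      List.append_assoc]

lemma glue_sig2 (h : Hist K C D n) :
    ∀ {m : ℕ} (s : Fin m → C × D × K), (h.glue s).sig2 = h.sig2 ++ (h.tailHist s).sig2 := by
  intro m
  induction m with
  | zero => intro s; rw [glue_zero, sig2_zero, List.append_nil]
  | succ m ih =>
    intro s
    rw [← Fin.snoc_init_self s, glue_snoc, tailHist_snoc, extend_sig2, extend_sig2, ih,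
      List.append_assoc]

lemma glue_visits {T : Finset K} (h : Hist K C D n) :
    ∀ {m : ℕ} (s : Fin m → C × D × K),
      (h.glue s).visits T ↔ h.visits T ∨ (h.tailHist s).visits T := by
  intro m
  induction m with
  | zero =>
    intro s
    rw [glue_zero]
    constructor
    · exact Or.inl
    · rintro (hv | hv)
      · exact hv
      · exact visits_of_last_mem h ((visits_zero_iff _).1 hv)
  | succ m ih =>
    intro s
    rw [← Fin.snoc_init_self s, glue_snoc, tailHist_snoc, visits_extend, visits_extend, ih,
      or_assoc]

end Hist

/-- `Hist (n+m)` as pairs of an `n`-step play and extra steps. -/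
def histGlueEquiv (n m : ℕ) : Hist K C D (n + m) ≃ (Hist K C D n) × (Fin m → C × D × K) where
  toFun h := (⟨h.first, fun i => h.steps (Fin.castAdd m i)⟩, fun r => h.steps (Fin.natAdd n r))
  invFun p := p.1.glue p.2
  left_inv h := by
    cases h with
    | mk f st =>
      unfold Hist.glue
      simp only [Hist.mk.injEq, true_and]
      funext i
      refine Fin.addCases (fun i => ?_) (fun r => ?_) i
      · rw [Fin.append_left]
      · rw [Fin.append_right]
  right_inv p := by
    obtain ⟨h, s⟩ := p
    cases h with
    | mk f st =>
      unfold Hist.glue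
      simp only [Prod.mk.injEq]
      constructor
      · simp only [Hist.mk.injEq, true_and]
        funext i
        rw [Fin.append_left]
      · funext r
        rw [Fin.append_right]

lemma sum_hist_glue (n m : ℕ) (f : Hist K C D (n + m) → ℝ) :
    ∑ h : Hist K C D (n + m), f h
      = ∑ h : Hist K C D n, ∑ s : Fin m → C × D × K, f (h.glue s) := by
  rw [← Finset.sum_product']
  exact Fintype.sum_equiv (histGlueEquiv n m) _ _ (fun h => by
    simp only [histGlueEquiv, Equiv.coe_fn_mk]
    congr 1
    exact ((histGlueEquiv n m).left_inv h).symm)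

/-- Summing over plays with a fixed first state. -/
def histFirstEquiv (m : ℕ) : Hist K C D m ≃ K × (Fin m → C × D × K) where
  toFun h := (h.first, h.steps)
  invFun p := ⟨p.1, p.2⟩
  left_inv h := rfl
  right_inv p := rfl

namespace Game

variable (G : Game K I J C D)

lemma playProb_first_ne (σ : Strategy1 I C) (τ : Strategy2 J D) {k : K} :
    ∀ (n : ℕ) (h : Hist K C D n), h.first ≠ k → G.playProb (dirac k) σ τ n h = 0 := by
  have hF : ∀ (n : ℕ) (h : Hist K C D n), h.first ≠ k → G.F0' (dirac k) n h = 0 := by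
    intro n
    induction n with
    | zero => intro h hne; exact dirac_f_ne hne
    | succ n ih =>
      intro h hne
      show G.F0' (dirac k) n h.init * _ = 0
      rw [ih h.init hne, zero_mul]
  intro n h hne
  rw [G.playProb_factor, hF n h hne, zero_mul, zero_mul]

lemma playProb_glue (δ : FDist K) (σ : Strategy1 I C) (τ : Strategy2 J D) (n : ℕ)
    (h : Hist K C D n) :
    ∀ (m : ℕ) (s : Fin m → C × D × K),
      G.playProb δ σ τ (n + m) (h.glue s)
        = G.playProb δ σ τ n h *
            G.playProb (dirac h.last) (shifted σ h.sig1) (shifted τ h.sig2) m (h.tailHist s) := by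
  intro m
  induction m with
  | zero =>
    intro s
    rw [Hist.glue_zero]
    show G.playProb δ σ τ n h = G.playProb δ σ τ n h * (dirac h.last).f h.last
    rw [dirac_f_self, mul_one]
  | succ m ih =>
    intro s
    rw [← Fin.snoc_init_self s, Hist.glue_snoc, Hist.tailHist_snoc]
    have e1 : G.playProb δ σ τ (n + (m+1)) ((h.glue (Fin.init s)).extend (s (Fin.last m)))
        = G.playProb δ σ τ (n+m) (h.glue (Fin.init s)) *
            ((σ (h.glue (Fin.init s)).sig1).f (G.act₁ (s (Fin.last m)).1) *
              (τ (h.glue (Fin.init s)).sig2).f (G.act₂ (s (Fin.last m)).2.1) *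
              G.p (h.glue (Fin.init s)).last (G.act₁ (s (Fin.last m)).1)
                (G.act₂ (s (Fin.last m)).2.1) (s (Fin.last m))) :=
      G.playProb_extend δ σ τ (n+m) (h.glue (Fin.init s)) (s (Fin.last m))
    have e2 : G.playProb (dirac h.last) (shifted σ h.sig1) (shifted τ h.sig2) (m+1)
          ((h.tailHist (Fin.init s)).extend (s (Fin.last m)))
        = G.playProb (dirac h.last) (shifted σ h.sig1) (shifted τ h.sig2) m
              (h.tailHist (Fin.init s)) *
            ((shifted σ h.sig1 (h.tailHist (Fin.init s)).sig1).f (G.act₁ (s (Fin.last m)).1) *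
              (shifted τ h.sig2 (h.tailHist (Fin.init s)).sig2).f (G.act₂ (s (Fin.last m)).2.1) *
              G.p (h.tailHist (Fin.init s)).last (G.act₁ (s (Fin.last m)).1)
                (G.act₂ (s (Fin.last m)).2.1) (s (Fin.last m))) :=
      G.playProb_extend _ _ _ m _ _
    rw [e1, e2, ih, Hist.glue_sig1, Hist.glue_sig2, Hist.glue_last]
    simp only [shifted]
    ring

lemma sum_tail_noTmass (σ' : Strategy1 I C) (τ' : Strategy2 J D) (m : ℕ) (k : K) :
    (∑ s : Fin m → C × D × K,
        if (Hist.mk k s : Hist K C D m).visits G.T then 0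
        else G.playProb (dirac k) σ' τ' m ⟨k, s⟩)
      = G.noTmass (dirac k) σ' τ' m := by
  rw [noTmass]
  have e1 : (∑ h'' : Hist K C D m,
      if h''.visits G.T then 0 else G.playProb (dirac k) σ' τ' m h'')
      = ∑ p : K × (Fin m → C × D × K),
        (if (Hist.mk p.1 p.2 : Hist K C D m).visits G.T then 0
          else G.playProb (dirac k) σ' τ' m ⟨p.1, p.2⟩) :=
    Fintype.sum_equiv (histFirstEquiv m) _ _ (fun h'' => by cases h''; rfl)
  rw [e1, Fintype.sum_prod_type]
  rw [Finset.sum_eq_single k]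
  · intro k' _ hk'
    apply Finset.sum_eq_zero
    intro s _
    rw [G.playProb_first_ne _ _ m ⟨k', s⟩ hk']
    split_ifs <;> rfl
  · intro hmem; exact absurd (Finset.mem_univ _) hmem

lemma noTmass_glue (δ : FDist K) (σ : Strategy1 I C) (τ : Strategy2 J D) (n m : ℕ) :
    G.noTmass δ σ τ (n + m)
      = ∑ h : Hist K C D n, if h.visits G.T then 0
          else G.playProb δ σ τ n h *
            G.noTmass (dirac h.last) (shifted σ h.sig1) (shifted τ h.sig2) m := by
  rw [noTmass, sum_hist_glue]
  apply Finset.sum_congr rfl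
  intro h _
  by_cases hv : h.visits G.T
  · rw [if_pos hv]
    apply Finset.sum_eq_zero
    intro s _
    rw [if_pos ((Hist.glue_visits h s).2 (Or.inl hv))]
  · rw [if_neg hv]
    have step1 : (∑ s : Fin m → C × D × K,
        if (h.glue s).visits G.T then 0 else G.playProb δ σ τ (n + m) (h.glue s))
        = ∑ s : Fin m → C × D × K,
          G.playProb δ σ τ n h *
            (if (h.tailHist s).visits G.T then 0
              else G.playProb (dirac h.last) (shifted σ h.sig1) (shifted τ h.sig2) m
                (h.tailHist s)) := by
      apply Finset.sum_congr rfl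
      intro s _
      have hv2 : (h.glue s).visits G.T ↔ (h.tailHist s).visits G.T := by
        rw [Hist.glue_visits]
        constructor
        · rintro (h1 | h1)
          · exact absurd h1 hv
          · exact h1
        · exact Or.inr
      by_cases hvt : (h.tailHist s).visits G.T
      · rw [if_pos (hv2.2 hvt), if_pos hvt, mul_zero]
      · rw [if_neg (fun hh => hvt (hv2.1 hh)), if_neg hvt, G.playProb_glue]
    rw [step1, ← Finset.mul_sum]
    congr 1
    exact G.sum_tail_noTmass (shifted σ h.sig1) (shifted τ h.sig2) m h.last

end Game

end Aux4

section Aux5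
set_option linter.unusedSectionVars false
set_option maxHeartbeats 1000000

namespace Game

variable (G : Game K I J C D)

lemma mem_B1p {L : Finset K} {c : C} {k : K} :
    k ∈ G.B1p L c
      ↔ ∃ l ∈ L \ G.T, ∃ d : D, 0 < G.p l (G.act₁ c) (G.act₂ d) (c, d, k) := by
  unfold B1p B1
  simp

lemma B1pseq_nil (L : Finset K) : G.B1pseq L [] = L := rfl

lemma B1pseq_append (L : Finset K) (cs cs' : List C) :
    G.B1pseq L (cs ++ cs') = G.B1pseq (G.B1pseq L cs) cs' := by
  unfold B1pseq
  exact List.foldl_append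

lemma B1pseq_snoc (L : Finset K) (cs : List C) (c : C) :
    G.B1pseq L (cs ++ [c]) = G.B1p (G.B1pseq L cs) c := by
  rw [B1pseq_append]; rfl

/-- Invariant: along a positive-probability play that never visits the target, the
current state belongs to player 1's pessimistic belief. -/
lemma state_mem_belief (δ : FDist K) (σ : Strategy1 I C) (τ : Strategy2 J D)
    {L₀ : Finset K} (hsub : ∀ x, 0 < δ.f x → x ∈ L₀) :
    ∀ (n : ℕ) (h : Hist K C D n), 0 < G.playProb δ σ τ n h → ¬ h.visits G.T →
      ∀ r : Fin (n + 1), h.state r ∈ G.B1pseq L₀ (h.sig1.take r.val) := by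
  intro n
  induction n with
  | zero =>
    intro h hpos _ r
    have hr : r = 0 := Fin.ext (by omega)
    subst hr
    rw [Hist.state_zero, Hist.sig1_zero, List.take_nil, B1pseq_nil]
    exact hsub _ hpos
  | succ n ih =>
    intro h hpos hvis r
    rw [← Hist.eta h] at hpos hvis ⊢
    set h₀ := h.init with hh₀
    set x := h.steps (Fin.last n) with hx
    rw [G.playProb_extend] at hpos
    have hfac := pos_pair (G.playProb_nonneg δ σ τ n h₀)
      (by
        apply mul_nonneg (mul_nonneg ((σ _).nonneg _) ((τ _).nonneg _)) (G.p_nonneg _ _ _ _))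
      hpos
    rw [Hist.visits_extend] at hvis
    push_neg at hvis
    rcases Fin.eq_castSucc_or_eq_last r with ⟨r', rfl⟩ | rfl
    · rw [Hist.extend_state_castSucc, Hist.extend_sig1]
      rw [List.take_append_of_le_length (by rw [Hist.sig1_length]; exact Nat.lt_succ_iff.mp r'.isLt)]
      exact ih h₀ hfac.1 hvis.1 r'
    · rw [Hist.extend_state_last, Hist.extend_sig1]
      have hlen : (Fin.last (n+1) : Fin (n+2)).val = (h₀.sig1 ++ [x.1]).length := by
        simp
      rw [hlen, List.take_length, B1pseq_snoc]
      rw [G.mem_B1p]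
      refine ⟨h₀.last, ?_, x.2.1, ?_⟩
      · rw [Finset.mem_sdiff]
        constructor
        · have := ih h₀ hfac.1 hvis.1 (Fin.last n)
          rw [Hist.state_last] at this
          have hfull : (h₀.sig1.take (Fin.last n).val) = h₀.sig1 := by
            have : (Fin.last n).val = h₀.sig1.length := by simp
            rw [this, List.take_length]
          rwa [hfull] at this
        · exact Hist.last_not_mem_of_not_visits h₀ hvis.1
      · have hp := (pos_pair (mul_nonneg ((σ _).nonneg _) ((τ _).nonneg _))
          (G.p_nonneg _ _ _ _) hfac.2).2
        exact hp

/-- The uniform belief-based strategy of player 1 given an action-set structure. -/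
def beliefStrat (𝔄 : Finset K → Finset I) (L : Finset K) : Strategy1 I C :=
  fun cs => uniformD (𝔄 (G.B1pseq L cs))

lemma shifted_beliefStrat (𝔄 : Finset K → Finset I) (L : Finset K) (cs : List C) :
    shifted (G.beliefStrat 𝔄 L) cs = G.beliefStrat 𝔄 (G.B1pseq L cs) := by
  funext l
  unfold shifted beliefStrat
  rw [B1pseq_append]

/-- The uniform pattern-based strategy of player 2. -/
def patStrat (𝔖 : List D → Finset J) : Strategy2 J D :=
  fun ds => uniformD (𝔖 ds)

/-- A support pattern `𝔖` for player 2 is surely safe against the belief strategy of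
player 1 determined by `𝔄`, starting from state `k` and belief `L`. -/
def SafePat (𝔄 : Finset K → Finset I) (L : Finset K) (k : K) (𝔖 : List D → Finset J) : Prop :=
  ∀ (n : ℕ) (h : Hist K C D n),
    0 < G.playProb (dirac k) (G.beliefStrat 𝔄 L) (patStrat 𝔖) n h → ¬ h.visits G.T

/-- A valid structure for player 1: a collection of belief supports together with
action sets, which is closed under pessimistic belief updates and from which
player 2 has no surely-safe response pattern. -/
def ValidStruct (𝒲 : Set (Finset K)) (𝔄 : Finset K → Finset I) : Prop :=
  (∀ L ∈ 𝒲, L.Nonempty ∧ (𝔄 L).Nonempty) ∧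
  (∀ L ∈ 𝒲, ∀ i ∈ 𝔄 L, ∀ c : C, G.act₁ c = i →
    G.B1p L c = ∅ ∨ G.B1p L c ∈ 𝒲) ∧
  (∀ L ∈ 𝒲, ∀ k ∈ L, k ∉ G.T → ∀ 𝔖 : List D → Finset J, ¬ G.SafePat 𝔄 L k 𝔖)

/-- The collection of all supports belonging to some valid structure. -/
def GoodSet : Set (Finset K) := {L | ∃ 𝒲 𝔄, G.ValidStruct 𝒲 𝔄 ∧ L ∈ 𝒲}

/-- The union of the action-set structures of all valid structures. -/
def AStar : Finset K → Finset I := fun L =>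
  Finset.univ.filter fun i => ∃ 𝒲 𝔄, G.ValidStruct 𝒲 𝔄 ∧ L ∈ 𝒲 ∧ i ∈ 𝔄 L

lemma AStar_superset {𝒲 : Set (Finset K)} {𝔄 : Finset K → Finset I}
    (hV : G.ValidStruct 𝒲 𝔄) {L : Finset K} (hL : L ∈ 𝒲) : 𝔄 L ⊆ G.AStar L := by
  intro i hi
  rw [AStar, Finset.mem_filter]
  exact ⟨Finset.mem_univ i, 𝒲, 𝔄, hV, hL, hi⟩

/-- Beliefs stay inside `𝒲` along positive plays of the belief strategy. -/
lemma belief_closure {𝒲 : Set (Finset K)} {𝔄 : Finset K → Finset I}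
    (hV : G.ValidStruct 𝒲 𝔄) {L : Finset K} (hL : L ∈ 𝒲) (δ : FDist K)
    (hsub : ∀ x, 0 < δ.f x → x ∈ L) (τ : Strategy2 J D) :
    ∀ (n : ℕ) (h : Hist K C D n), 0 < G.playProb δ (G.beliefStrat 𝔄 L) τ n h →
      ¬ h.visits G.T → G.B1pseq L h.sig1 ∈ 𝒲 := by
  intro n
  induction n with
  | zero =>
    intro h _ _
    rw [Hist.sig1_zero, B1pseq_nil]
    exact hL
  | succ n ih =>
    intro h hpos hvis
    rw [← Hist.eta h] at hpos hvis ⊢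
    set h₀ := h.init with hh₀
    set x := h.steps (Fin.last n) with hx
    rw [G.playProb_extend] at hpos
    have hfac := pos_pair (G.playProb_nonneg _ _ _ n h₀)
      (by
        apply mul_nonneg (mul_nonneg ((G.beliefStrat 𝔄 L _).nonneg _) ((τ _).nonneg _))
          (G.p_nonneg _ _ _ _))
      hpos
    rw [Hist.visits_extend] at hvis
    push_neg at hvis
    have hbel : G.B1pseq L h₀.sig1 ∈ 𝒲 := ih h₀ hfac.1 hvis.1
    have hσ : 0 < (G.beliefStrat 𝔄 L h₀.sig1).f (G.act₁ x.1) :=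
      (pos_pair (mul_nonneg ((G.beliefStrat 𝔄 L _).nonneg _) ((τ _).nonneg _))
        (G.p_nonneg _ _ _ _) hfac.2).1
        |> fun hp => (pos_pair ((G.beliefStrat 𝔄 L _).nonneg _) ((τ _).nonneg _) hp).1
    have hmem : G.act₁ x.1 ∈ 𝔄 (G.B1pseq L h₀.sig1) := by
      apply mem_of_uniformD_f_pos ((hV.1 _ hbel).2)
      exact hσ
    have hupd := hV.2.1 _ hbel _ hmem x.1 rfl
    rw [Hist.extend_sig1, B1pseq_snoc]
    rcases hupd with hemp | hgood
    · exfalso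
      have hst := G.state_mem_belief δ (G.beliefStrat 𝔄 L) τ hsub (n+1)
        (h₀.extend x) (by rw [G.playProb_extend]; exact hpos) (by
          rw [Hist.visits_extend]; push_neg; exact hvis) (Fin.last (n+1))
      rw [Hist.extend_state_last, Hist.extend_sig1] at hst
      have hlen : (Fin.last (n+1) : Fin (n+2)).val = (h₀.sig1 ++ [x.1]).length := by simp
      rw [hlen, List.take_length, B1pseq_snoc, hemp] at hst
      exact absurd hst (Finset.notMem_empty _)
    · exact hgood

/-- Transfer of positivity and safety between strategies of player 1. -/
lemma pos_transfer (δ : FDist K) (σ₁ σ₂ : Strategy1 I C) (τ : Strategy2 J D)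
    (hSafe : ∀ (n : ℕ) (h : Hist K C D n), 0 < G.playProb δ σ₂ τ n h → ¬ h.visits G.T)
    (hbase : ∀ h : Hist K C D 0, 0 < G.playProb δ σ₁ τ 0 h → 0 < G.playProb δ σ₂ τ 0 h)
    (hdom : ∀ (n : ℕ) (h : Hist K C D n) (x : C × D × K), ¬ h.visits G.T →
      0 < G.playProb δ σ₂ τ n h → 0 < G.playProb δ σ₁ τ (n+1) (h.extend x) →
      0 < G.playProb δ σ₂ τ (n+1) (h.extend x)) :
    ∀ (n : ℕ) (h : Hist K C D n), 0 < G.playProb δ σ₁ τ n h →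
      0 < G.playProb δ σ₂ τ n h ∧ ¬ h.visits G.T := by
  intro n
  induction n with
  | zero =>
    intro h hpos
    have h2 := hbase h hpos
    exact ⟨h2, hSafe 0 h h2⟩
  | succ n ih =>
    intro h hpos
    rw [← Hist.eta h] at hpos ⊢
    set h₀ := h.init
    set x := h.steps (Fin.last n)
    have hpos₀ : 0 < G.playProb δ σ₁ τ n h₀ := by
      rw [G.playProb_extend] at hpos
      exact (pos_pair (G.playProb_nonneg _ _ _ _ _)
        (mul_nonneg (mul_nonneg ((σ₁ _).nonneg _) ((τ _).nonneg _)) (G.p_nonneg _ _ _ _))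
        hpos).1
    obtain ⟨hpos₂, hvis₀⟩ := ih h₀ hpos₀
    have h2 := hdom n h₀ x hvis₀ hpos₂ hpos
    exact ⟨h2, hSafe _ _ h2⟩

/-- Realizability: any state in the pessimistic belief is reached by a positive play. -/
lemma realize (δ : FDist K) (σ : Strategy1 I C) (τ : Strategy2 J D)
    (hτ : ∀ (ds : List D) (j : J), 0 < (τ ds).f j) :
    ∀ (cs : List C), 0 < gList σ G.act₁ cs →
      ∀ k ∈ G.B1pseq δ.support cs, k ∉ G.T →
        ∃ (n : ℕ) (h : Hist K C D n), ¬ h.visits G.T ∧ h.sig1 = cs ∧ h.last = k ∧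
          0 < G.playProb δ σ τ n h := by
  intro cs
  induction cs using List.reverseRecOn with
  | nil =>
    intro _ k hk hkT
    refine ⟨0, ⟨k, Fin.elim0⟩, ?_, ?_, rfl, ?_⟩
    · rw [Hist.visits_zero_iff]
      exact hkT
    · exact Hist.sig1_zero _
    · rw [B1pseq_nil, FDist.mem_support] at hk
      exact hk
  | append_singleton cs c ih =>
    intro hgpos k hk hkT
    rw [gList_snoc] at hgpos
    have hg := pos_pair (gList_nonneg _ _ _) ((σ cs).nonneg _) hgpos
    rw [B1pseq_snoc, G.mem_B1p] at hk
    obtain ⟨l, hlmem, d, hp⟩ := hk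
    rw [Finset.mem_sdiff] at hlmem
    obtain ⟨n₀, h₀, hvis₀, hsig₀, hlast₀, hpos₀⟩ := ih hg.1 l hlmem.1 hlmem.2
    refine ⟨n₀ + 1, h₀.extend (c, d, k), ?_, ?_, ?_, ?_⟩
    · rw [Hist.visits_extend]
      push_neg
      exact ⟨hvis₀, hkT⟩
    · rw [Hist.extend_sig1, hsig₀]
    · rw [Hist.extend_last]
    · rw [G.playProb_extend]
      apply mul_pos hpos₀
      apply mul_pos (mul_pos _ (hτ _ _))
      · show (0:ℝ) < G.p h₀.last (G.act₁ c) (G.act₂ d) (c, d, k)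
        rw [hlast₀]
        exact hp
      · rw [hsig₀]
        exact hg.2

end Game

end Aux5

section Aux6
set_option linter.unusedSectionVars false
set_option maxHeartbeats 1000000

namespace Game

variable (G : Game K I J C D)

/-- The union of all valid structures is a valid structure. -/
lemma validStruct_AStar : G.ValidStruct G.GoodSet G.AStar := by
  refine ⟨?_, ?_, ?_⟩
  · rintro L ⟨𝒲, 𝔄, hV, hL⟩
    refine ⟨(hV.1 L hL).1, ?_⟩
    obtain ⟨i, hi⟩ := (hV.1 L hL).2
    exact ⟨i, G.AStar_superset hV hL hi⟩
  · intro L hL i hi c hc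
    rw [AStar, Finset.mem_filter] at hi
    obtain ⟨-, 𝒲, 𝔄, hV, hLW, hiA⟩ := hi
    rcases hV.2.1 L hLW i hiA c hc with h | h
    · exact Or.inl h
    · exact Or.inr ⟨𝒲, 𝔄, hV, h⟩
  · rintro L ⟨𝒲, 𝔄, hV, hLW⟩ k hk hkT 𝔖 hS
    apply hV.2.2 L hLW k hk hkT 𝔖
    intro n h hpos
    refine (G.pos_transfer (dirac k) (G.beliefStrat 𝔄 L) (G.beliefStrat G.AStar L)
      (patStrat 𝔖) hS ?_ ?_ n h hpos).2
    · intro h0 hp0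
      exact hp0
    · intro n' h' x hvis' hpos₂ hpos₁
      have hpos₁' : 0 < G.playProb (dirac k) (G.beliefStrat 𝔄 L) (patStrat 𝔖) n' h' := by
        rw [G.playProb_extend] at hpos₁
        exact (pos_pair (G.playProb_nonneg _ _ _ _ _)
          (mul_nonneg (mul_nonneg ((G.beliefStrat 𝔄 L _).nonneg _) ((patStrat 𝔖 _).nonneg _))
            (G.p_nonneg _ _ _ _)) hpos₁).1
      have hbel : G.B1pseq L h'.sig1 ∈ 𝒲 :=
        G.belief_closure hV hLW (dirac k)
          (fun x hx => by rwa [dirac_f_pos_iff.1 hx]) (patStrat 𝔖) n' h' hpos₁' hvis'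
      rw [G.playProb_extend] at hpos₁ ⊢
      apply mul_pos hpos₂
      have hfac := (pos_pair (G.playProb_nonneg _ _ _ _ _)
        (mul_nonneg (mul_nonneg ((G.beliefStrat 𝔄 L _).nonneg _) ((patStrat 𝔖 _).nonneg _))
          (G.p_nonneg _ _ _ _)) hpos₁).2
      have hσ1 := (pos_pair (mul_nonneg ((G.beliefStrat 𝔄 L _).nonneg _)
        ((patStrat 𝔖 _).nonneg _)) (G.p_nonneg _ _ _ _) hfac).1
      have hp := (pos_pair (mul_nonneg ((G.beliefStrat 𝔄 L _).nonneg _)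
        ((patStrat 𝔖 _).nonneg _)) (G.p_nonneg _ _ _ _) hfac).2
      have hτ := (pos_pair ((G.beliefStrat 𝔄 L _).nonneg _) ((patStrat 𝔖 _).nonneg _)
        (pos_pair (mul_nonneg ((G.beliefStrat 𝔄 L _).nonneg _) ((patStrat 𝔖 _).nonneg _))
          (G.p_nonneg _ _ _ _) hfac).1).2
      have hσi : G.act₁ x.1 ∈ 𝔄 (G.B1pseq L h'.sig1) := by
        apply mem_of_uniformD_f_pos (hV.1 _ hbel).2
        exact (pos_pair ((G.beliefStrat 𝔄 L _).nonneg _) ((patStrat 𝔖 _).nonneg _)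
          (pos_pair (mul_nonneg ((G.beliefStrat 𝔄 L _).nonneg _)
            ((patStrat 𝔖 _).nonneg _)) (G.p_nonneg _ _ _ _) hfac).1).1
      apply mul_pos (mul_pos _ hτ) hp
      show 0 < (uniformD (G.AStar (G.B1pseq L h'.sig1))).f (G.act₁ x.1)
      exact uniformD_f_pos_of_mem (G.AStar_superset hV hbel hσi)

lemma playProb_congr_tau (δ : FDist K) (σ : Strategy1 I C) (τ₁ τ₂ : Strategy2 J D) :
    ∀ (n : ℕ) (h : Hist K C D n),
      (∀ r : ℕ, r < n → τ₁ (h.sig2.take r) = τ₂ (h.sig2.take r)) →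
      G.playProb δ σ τ₁ n h = G.playProb δ σ τ₂ n h := by
  intro n
  induction n with
  | zero => intro h _; rfl
  | succ n ih =>
    intro h hagree
    rw [← Hist.eta h] at hagree ⊢
    set h₀ := h.init
    set x := h.steps (Fin.last n)
    rw [G.playProb_extend, G.playProb_extend]
    have h1 : G.playProb δ σ τ₁ n h₀ = G.playProb δ σ τ₂ n h₀ := by
      apply ih
      intro r hr
      have := hagree r (by omega)
      rwa [Hist.extend_sig2,
        List.take_append_of_le_length (by rw [Hist.sig2_length]; omega)] at this
    have h2 : τ₁ h₀.sig2 = τ₂ h₀.sig2 := by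
      have hh := hagree n (by omega)
      rw [Hist.extend_sig2,
        List.take_append_of_le_length (by rw [Hist.sig2_length])] at hh
      rwa [List.take_of_length_le (by rw [Hist.sig2_length])] at hh
    rw [h1, h2]

/-- If no support pattern of player 2 is surely safe, there is a uniform horizon by
which every pattern has been positively punished (König's lemma style argument). -/
lemma exists_uniform_horizon (𝔄 : Finset K → Finset I) (L : Finset K) (k : K)
    (hno : ∀ 𝔖 : List D → Finset J, ¬ G.SafePat 𝔄 L k 𝔖) :
    ∃ N : ℕ, ∀ 𝔖 : List D → Finset J, ∃ (n : ℕ) (h : Hist K C D n), n ≤ N ∧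
      0 < G.playProb (dirac k) (G.beliefStrat 𝔄 L) (patStrat 𝔖) n h ∧ h.visits G.T := by
  by_contra hcon
  push_neg at hcon
  -- for each N, a pattern that is safe up to horizon N
  choose A hA using hcon
  -- a denumeration of P2 signal sequences
  have hEnc : Encodable (List D) := Encodable.ofCountable _
  have hDen : Denumerable (List D) := Denumerable.ofEncodableOfInfinite (List D)
  let e : ℕ ≃ List D := (Denumerable.eqv (List D)).symm
  -- diagonal extraction
  have hstep : ∀ (S : Set ℕ), S.Infinite → ∀ r : ℕ, ∃ p : Set ℕ × Finset J,
      p.1.Infinite ∧ p.1 ⊆ S ∧ ∀ N ∈ p.1, A N (e r) = p.2 := by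
    intro S hS r
    have : Infinite S := Set.infinite_coe_iff.2 hS
    obtain ⟨v, hv⟩ := Finite.exists_infinite_fiber (fun x : S => A x.1 (e r))
    refine ⟨(Subtype.val '' ((fun x : S => A x.1 (e r)) ⁻¹' {v}), v), ?_, ?_, ?_⟩
    · have : ((fun x : S => A x.1 (e r)) ⁻¹' {v}).Infinite := Set.infinite_coe_iff.1 hv
      exact this.image Subtype.val_injective.injOn
    · rintro N ⟨x, _, rfl⟩
      exact x.2
    · rintro N ⟨x, hx, rfl⟩
      exact hx
  choose F hFinf hFsub hFval using hstep
  let seq : ℕ → {S : Set ℕ // S.Infinite} := fun r =>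
    Nat.rec ⟨Set.univ, Set.infinite_univ⟩
      (fun r Sr => ⟨(F Sr.1 Sr.2 r).1, hFinf Sr.1 Sr.2 r⟩) r
  have hseq_succ : ∀ r : ℕ, (seq (r+1)).1 = (F (seq r).1 (seq r).2 r).1 := fun r => rfl
  have hseq_mono : ∀ r r' : ℕ, r ≤ r' → (seq r').1 ⊆ (seq r).1 := by
    intro r r' hrr'
    induction r' with
    | zero => rw [Nat.le_zero.1 hrr']
    | succ r' ih =>
      rcases Nat.lt_or_ge r (r'+1) with hlt | hge
      · refine subset_trans ?_ (ih (Nat.lt_succ_iff.1 hlt))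
        rw [hseq_succ]
        exact hFsub _ _ _
      · rw [Nat.le_antisymm hrr' hge]
  -- the diagonal pattern
  let 𝔖star : List D → Finset J := fun ds =>
    (F (seq (e.symm ds)).1 (seq (e.symm ds)).2 (e.symm ds)).2
  have hval : ∀ (r : ℕ) (N : ℕ), N ∈ (seq (r+1)).1 → A N (e r) = 𝔖star (e r) := by
    intro r N hN
    rw [hseq_succ] at hN
    have := hFval (seq r).1 (seq r).2 r N hN
    rw [this]
    show _ = (F (seq (e.symm (e r))).1 (seq (e.symm (e r))).2 (e.symm (e r))).2
    rw [Equiv.symm_apply_apply]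
  -- 𝔖star would be safe, contradiction
  apply hno 𝔖star
  intro n₁ h₁ hpos
  by_contra hvis
  -- bound on the indices of the queried prefixes
  set R := ((Finset.range n₁).sup fun r => e.symm (h₁.sig2.take r)) + 1 with hR
  obtain ⟨N, hNmem, hNge⟩ := (seq R).2.exists_gt n₁
  have hagree : ∀ r : ℕ, r < n₁ →
      patStrat 𝔖star (h₁.sig2.take r) = patStrat (A N) (h₁.sig2.take r) := by
    intro r hr
    unfold patStrat
    congr 1
    have hidx : e.symm (h₁.sig2.take r) + 1 ≤ R := by
      have : e.symm (h₁.sig2.take r) ≤ (Finset.range n₁).sup fun r => e.symm (h₁.sig2.take r) :=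
        Finset.le_sup (f := fun r => e.symm (h₁.sig2.take r)) (Finset.mem_range.2 hr)
      omega
    have hNmem' : N ∈ (seq (e.symm (h₁.sig2.take r) + 1)).1 :=
      hseq_mono _ _ hidx hNmem
    have := hval (e.symm (h₁.sig2.take r)) N hNmem'
    rw [Equiv.apply_symm_apply] at this
    exact this.symm
  have hpos' : 0 < G.playProb (dirac k) (G.beliefStrat 𝔄 L) (patStrat (A N)) n₁ h₁ := by
    rwa [← G.playProb_congr_tau (dirac k) (G.beliefStrat 𝔄 L) _ _ n₁ h₁ hagree]
  exact hA N n₁ h₁ (le_of_lt hNge) hpos' hvis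

end Game

end Aux6

section Aux7
set_option linter.unusedSectionVars false
set_option maxHeartbeats 1000000

lemma gList_ge_inv_card {X Y : Type*} [Fintype Y] [Nonempty Y] (a : X → Y) :
    ∀ (l : List X) (u : List X → FDist Y),
      (∀ (cs : List X) (y : Y), 0 < (u cs).f y → ((Fintype.card Y : ℝ))⁻¹ ≤ (u cs).f y) →
      0 < gList u a l → ((Fintype.card Y : ℝ))⁻¹ ^ l.length ≤ gList u a l := by
  intro l
  induction l with
  | nil => intro u _ _; simp
  | cons x l ih =>
    intro u hu hpos
    rw [gList_cons] at hpos ⊢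
    have hfac := pos_pair ((u []).nonneg _) (gList_nonneg _ _ _) hpos
    have h1 : ((Fintype.card Y : ℝ))⁻¹ ≤ (u []).f (a x) := hu [] _ hfac.1
    have h2 := ih (shifted u [x]) (fun cs y hy => hu ([x] ++ cs) y hy) hfac.2
    rw [List.length_cons, pow_succ']
    apply mul_le_mul h1 h2 (by positivity) (le_of_lt hfac.1)

/-- The threshold pattern of a player-2 strategy. -/
noncomputable def threshPat (τ : Strategy2 J D) : List D → Finset J :=
  fun ds => Finset.univ.filter fun j => (Fintype.card J : ℝ)⁻¹ ≤ (τ ds).f j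

lemma threshPat_nonempty (τ : Strategy2 J D) (ds : List D) : (threshPat τ ds).Nonempty := by
  by_contra hne
  rw [Finset.not_nonempty_iff_eq_empty] at hne
  have hall : ∀ j : J, (τ ds).f j < (Fintype.card J : ℝ)⁻¹ := by
    intro j
    by_contra hj
    push_neg at hj
    have : j ∈ threshPat τ ds := Finset.mem_filter.2 ⟨Finset.mem_univ _, hj⟩
    rw [hne] at this
    exact absurd this (Finset.notMem_empty _)
  have hsum : (1:ℝ) < 1 := by
    conv_lhs => rw [← (τ ds).sum_one]
    calc ∑ j : J, (τ ds).f j < ∑ _j : J, (Fintype.card J : ℝ)⁻¹ :=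
          Finset.sum_lt_sum_of_nonempty Finset.univ_nonempty (fun j _ => hall j)
      _ = (Fintype.card J : ℝ) * (Fintype.card J : ℝ)⁻¹ := by
          rw [Finset.sum_const, Finset.card_univ, nsmul_eq_mul]
      _ = 1 := by
          rw [mul_inv_cancel₀]
          exact_mod_cast Fintype.card_ne_zero
  exact absurd hsum (lt_irrefl _)

lemma shifted_patStrat_thresh (τ : Strategy2 J D) (x : D) :
    shifted (Game.patStrat (threshPat τ) : Strategy2 J D) [x]
      = Game.patStrat (threshPat (shifted τ [x])) := rfl

lemma gList_ge_thresh (a : D → J) :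
    ∀ (l : List D) (τ : Strategy2 J D),
      0 < gList (Game.patStrat (threshPat τ) : Strategy2 J D) a l →
      ((Fintype.card J : ℝ))⁻¹ ^ l.length ≤ gList τ a l := by
  intro l
  induction l with
  | nil => intro τ _; simp
  | cons x l ih =>
    intro τ hpos
    rw [gList_cons] at hpos ⊢
    have hfac := pos_pair ((Game.patStrat (threshPat τ) []).nonneg _) (gList_nonneg _ _ _) hpos
    have hmem : a x ∈ threshPat τ [] := by
      apply mem_of_uniformD_f_pos (threshPat_nonempty τ [])
      exact hfac.1
    have h1 : ((Fintype.card J : ℝ))⁻¹ ≤ (τ []).f (a x) :=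
      (Finset.mem_filter.1 hmem).2
    have hpos2 : 0 < gList (Game.patStrat (threshPat (shifted τ [x])) : Strategy2 J D) a l := by
      rw [← shifted_patStrat_thresh]
      exact hfac.2
    have h2 := ih (shifted τ [x]) hpos2
    rw [List.length_cons, pow_succ']
    apply mul_le_mul h1 h2 (by positivity) ((τ []).nonneg (a x))

namespace Game

variable (G : Game K I J C D)

lemma p_le_one (k : K) (i : I) (j : J) (x : C × D × K) : G.p k i j x ≤ 1 := by
  have h1 := G.p_sum k i j
  have : G.p k i j x ≤ ∑ y : C × D × K, G.p k i j y :=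
    Finset.single_le_sum (fun y _ => G.p_nonneg k i j y) (Finset.mem_univ x)
  linarith

/-- The set of positive transition probability values. -/
noncomputable def pminSet : Finset ℝ :=
  (Finset.univ.filter fun q : (K × I) × J × (C × D × K) =>
    0 < G.p q.1.1 q.1.2 q.2.1 q.2.2).image fun q => G.p q.1.1 q.1.2 q.2.1 q.2.2

lemma pminSet_nonempty : G.pminSet.Nonempty := by
  obtain ⟨k⟩ := (inferInstance : Nonempty K)
  obtain ⟨i⟩ := (inferInstance : Nonempty I)
  obtain ⟨j⟩ := (inferInstance : Nonempty J)
  have : ∃ x : C × D × K, 0 < G.p k i j x := by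
    by_contra hno
    push_neg at hno
    have : ∑ x : C × D × K, G.p k i j x ≤ 0 :=
      Finset.sum_nonpos fun x _ => hno x
    rw [G.p_sum] at this
    linarith
  obtain ⟨x, hx⟩ := this
  exact ⟨G.p k i j x, Finset.mem_image.2 ⟨((k, i), j, x),
    Finset.mem_filter.2 ⟨Finset.mem_univ _, hx⟩, rfl⟩⟩

/-- The least positive transition probability. -/
noncomputable def pmin : ℝ := G.pminSet.min' G.pminSet_nonempty

lemma pmin_pos : 0 < G.pmin := by
  have hm : G.pmin ∈ G.pminSet := G.pminSet.min'_mem G.pminSet_nonempty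
  unfold pminSet at hm
  rw [Finset.mem_image] at hm
  obtain ⟨q, hq, hval⟩ := hm
  rw [← hval]
  exact (Finset.mem_filter.1 hq).2

lemma pmin_le {k : K} {i : I} {j : J} {x : C × D × K} (h : 0 < G.p k i j x) :
    G.pmin ≤ G.p k i j x :=
  Finset.min'_le _ _ (Finset.mem_image.2 ⟨((k, i), j, x),
    Finset.mem_filter.2 ⟨Finset.mem_univ _, h⟩, rfl⟩)

lemma pmin_le_one : G.pmin ≤ 1 := by
  have hm : G.pmin ∈ G.pminSet := G.pminSet.min'_mem G.pminSet_nonempty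
  unfold pminSet at hm
  rw [Finset.mem_image] at hm
  obtain ⟨q, _, hval⟩ := hm
  rw [← hval]
  exact G.p_le_one _ _ _ _

lemma F0'_first_pos (δ : FDist K) :
    ∀ (n : ℕ) (h : Hist K C D n), 0 < G.F0' δ n h → 0 < δ.f h.first := by
  intro n
  induction n with
  | zero => intro h hp; exact hp
  | succ n ih =>
    intro h hp
    have := (pos_pair (G.F0'_nonneg δ n h.init) (G.p_nonneg _ _ _ _) hp).1
    exact ih h.init this

lemma F0'_ge_pmin (δ : FDist K) :
    ∀ (n : ℕ) (h : Hist K C D n), 0 < G.F0' δ n h →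
      δ.f h.first * G.pmin ^ n ≤ G.F0' δ n h := by
  intro n
  induction n with
  | zero => intro h _; show δ.f h.first * 1 ≤ δ.f h.first; rw [mul_one]
  | succ n ih =>
    intro h hp
    have hfac := pos_pair (G.F0'_nonneg δ n h.init) (G.p_nonneg _ _ _ _) hp
    have h1 := ih h.init hfac.1
    have h2 := G.pmin_le hfac.2
    show δ.f h.first * G.pmin ^ (n+1) ≤ G.F0' δ n h.init * _
    have hfirst : h.init.first = h.first := rfl
    calc δ.f h.first * G.pmin ^ (n+1) = (δ.f h.first * G.pmin ^ n) * G.pmin := by ring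
      _ ≤ G.F0' δ n h.init * G.p h.init.last (G.act₁ (h.steps (Fin.last n)).1)
            (G.act₂ (h.steps (Fin.last n)).2.1) (h.steps (Fin.last n)) := by
          apply mul_le_mul _ h2 (le_of_lt G.pmin_pos) (G.F0'_nonneg δ n h.init)
          rw [← hfirst]
          exact h1

/-- The horizon by which a good pair must have a punishing play. -/
noncomputable def horizonFor (L : Finset K) (k : K) : ℕ :=
  if h : L ∈ G.GoodSet ∧ k ∈ L ∧ k ∉ G.T then
    (G.exists_uniform_horizon G.AStar L k
      (fun 𝔖 => G.validStruct_AStar.2.2 L h.1 k h.2.1 h.2.2 𝔖)).choose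
  else 0

lemma horizonFor_spec {L : Finset K} {k : K} (hL : L ∈ G.GoodSet) (hk : k ∈ L)
    (hkT : k ∉ G.T) : ∀ 𝔖 : List D → Finset J, ∃ (n : ℕ) (h : Hist K C D n),
      n ≤ G.horizonFor L k ∧
      0 < G.playProb (dirac k) (G.beliefStrat G.AStar L) (patStrat 𝔖) n h ∧
      h.visits G.T := by
  have hcond : L ∈ G.GoodSet ∧ k ∈ L ∧ k ∉ G.T := ⟨hL, hk, hkT⟩
  rw [horizonFor, dif_pos hcond]
  exact (G.exists_uniform_horizon G.AStar L k
    (fun 𝔖 => G.validStruct_AStar.2.2 L hcond.1 k hcond.2.1 hcond.2.2 𝔖)).choose_spec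

/-- A uniform horizon for all good pairs. -/
noncomputable def bigN : ℕ :=
  (Finset.univ.sup fun q : Finset K × K => G.horizonFor q.1 q.2) + 1

lemma horizonFor_le_bigN (L : Finset K) (k : K) : G.horizonFor L k ≤ G.bigN := by
  have : G.horizonFor L k ≤ Finset.univ.sup fun q : Finset K × K => G.horizonFor q.1 q.2 :=
    Finset.le_sup (f := fun q : Finset K × K => G.horizonFor q.1 q.2) (Finset.mem_univ (L, k))
  rw [bigN]; omega

/-- The uniform progress bound. -/
noncomputable def epsd : ℝ :=
  (G.pmin * (Fintype.card J : ℝ)⁻¹ * (Fintype.card I : ℝ)⁻¹) ^ G.bigN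

lemma epsd_pos : 0 < G.epsd := by
  have := G.pmin_pos
  have hJ : (0:ℝ) < (Fintype.card J : ℝ) := by exact_mod_cast Fintype.card_pos
  have hI : (0:ℝ) < (Fintype.card I : ℝ) := by exact_mod_cast Fintype.card_pos
  apply pow_pos
  positivity

lemma epsd_le_one : G.epsd ≤ 1 := by
  apply pow_le_one₀
  · have := G.pmin_pos
    have hJ : (0:ℝ) < (Fintype.card J : ℝ)⁻¹ := by
      have : (0:ℝ) < (Fintype.card J : ℝ) := by exact_mod_cast Fintype.card_pos
      positivity
    have hI : (0:ℝ) < (Fintype.card I : ℝ)⁻¹ := by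
      have : (0:ℝ) < (Fintype.card I : ℝ) := by exact_mod_cast Fintype.card_pos
      positivity
    positivity
  · have h1 := G.pmin_le_one
    have h2 : (Fintype.card J : ℝ)⁻¹ ≤ 1 := by
      rw [inv_le_one_iff₀]
      right
      exact_mod_cast Fintype.card_pos
    have h3 : (Fintype.card I : ℝ)⁻¹ ≤ 1 := by
      rw [inv_le_one_iff₀]
      right
      exact_mod_cast Fintype.card_pos
    have hp := G.pmin_pos
    have hJ : (0:ℝ) ≤ (Fintype.card J : ℝ)⁻¹ := by positivity
    have hI : (0:ℝ) ≤ (Fintype.card I : ℝ)⁻¹ := by positivity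
    calc G.pmin * (Fintype.card J : ℝ)⁻¹ * (Fintype.card I : ℝ)⁻¹
        ≤ 1 * 1 * 1 := by
          apply mul_le_mul (mul_le_mul h1 h2 hJ (by linarith)) h3 hI (by positivity)
      _ = 1 := by ring

/-- The key progress lemma: from a good pair, against any strategy of player 2, the
belief strategy forces the target with probability at least `epsd` within `bigN` steps. -/
lemma progress (τ : Strategy2 J D) {L : Finset K} {k : K} (hL : L ∈ G.GoodSet)
    (hk : k ∈ L) (hkT : k ∉ G.T) :
    G.noTmass (dirac k) (G.beliefStrat G.AStar L) τ G.bigN ≤ 1 - G.epsd := by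
  obtain ⟨n, h, hn, hpos, hvis⟩ := G.horizonFor_spec hL hk hkT (threshPat τ)
  have hnN : n ≤ G.bigN := le_trans hn (G.horizonFor_le_bigN L k)
  -- decompose positivity of the pattern play
  rw [G.playProb_factor] at hpos
  have hf1 := pos_pair (mul_nonneg (G.F0'_nonneg _ _ _) (gList_nonneg _ _ _))
    (gList_nonneg _ _ _) hpos
  have hf2 := pos_pair (G.F0'_nonneg _ _ _) (gList_nonneg _ _ _) hf1.1
  -- lower bound for the play against τ itself
  have hbound : G.epsd ≤ G.playProb (dirac k) (G.beliefStrat G.AStar L) τ n h := by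
    rw [G.playProb_factor]
    have hB1 : G.pmin ^ n ≤ G.F0' (dirac k) n h := by
      have hh := G.F0'_ge_pmin (dirac k) n h hf2.1
      have hfirst := G.F0'_first_pos (dirac k) n h hf2.1
      rw [dirac_f_pos_iff.1 hfirst] at hh
      rwa [dirac_f_self, one_mul] at hh
    have hB2 : ((Fintype.card I : ℝ))⁻¹ ^ n ≤ gList (G.beliefStrat G.AStar L) G.act₁ h.sig1 := by
      have := gList_ge_inv_card G.act₁ h.sig1 (G.beliefStrat G.AStar L)
        (fun cs y hy => uniformD_f_inv_le hy) hf2.2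
      rwa [Hist.sig1_length] at this
    have hB3 : ((Fintype.card J : ℝ))⁻¹ ^ n ≤ gList τ G.act₂ h.sig2 := by
      have := gList_ge_thresh G.act₂ h.sig2 τ hf1.2
      rwa [Hist.sig2_length] at this
    have hIpos : (0:ℝ) < ((Fintype.card I : ℝ))⁻¹ := by
      have : (0:ℝ) < (Fintype.card I : ℝ) := by exact_mod_cast Fintype.card_pos
      positivity
    have hJpos : (0:ℝ) < ((Fintype.card J : ℝ))⁻¹ := by
      have : (0:ℝ) < (Fintype.card J : ℝ) := by exact_mod_cast Fintype.card_pos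
      positivity
    calc G.epsd ≤ (G.pmin * (Fintype.card J : ℝ)⁻¹ * (Fintype.card I : ℝ)⁻¹) ^ n := by
          rw [epsd]
          apply pow_le_pow_of_le_one _ _ hnN
          · have := G.pmin_pos; positivity
          · have h1 := G.pmin_le_one
            have h2 : (Fintype.card J : ℝ)⁻¹ ≤ 1 := by
              rw [inv_le_one_iff₀]; right; exact_mod_cast Fintype.card_pos
            have h3 : (Fintype.card I : ℝ)⁻¹ ≤ 1 := by
              rw [inv_le_one_iff₀]; right; exact_mod_cast Fintype.card_pos
            have hp := G.pmin_pos
            calc G.pmin * (Fintype.card J : ℝ)⁻¹ * (Fintype.card I : ℝ)⁻¹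
                ≤ 1 * 1 * 1 := by
                  apply mul_le_mul (mul_le_mul h1 h2 (le_of_lt hJpos) (by linarith))
                    h3 (le_of_lt hIpos) (by positivity)
              _ = 1 := by ring
      _ = G.pmin ^ n * ((Fintype.card J : ℝ))⁻¹ ^ n * ((Fintype.card I : ℝ))⁻¹ ^ n := by
          rw [mul_pow, mul_pow]
      _ ≤ G.F0' (dirac k) n h * gList τ G.act₂ h.sig2 *
            gList (G.beliefStrat G.AStar L) G.act₁ h.sig1 := by
          apply mul_le_mul (mul_le_mul hB1 hB3 (by positivity)
            (G.F0'_nonneg _ _ _)) hB2 (by positivity)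
          apply mul_nonneg (G.F0'_nonneg _ _ _) (gList_nonneg _ _ _)
      _ = G.F0' (dirac k) n h * gList (G.beliefStrat G.AStar L) G.act₁ h.sig1 *
            gList τ G.act₂ h.sig2 := by ring
  -- hence the reach probability is at least epsd at horizon n
  have hreach : G.epsd ≤ G.reachProb (dirac k) (G.beliefStrat G.AStar L) τ n := by
    calc G.epsd ≤ G.playProb (dirac k) (G.beliefStrat G.AStar L) τ n h := hbound
      _ = if h.visits G.T then G.playProb (dirac k) (G.beliefStrat G.AStar L) τ n h else 0 := by
          rw [if_pos hvis]
      _ ≤ G.reachProb (dirac k) (G.beliefStrat G.AStar L) τ n := by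
          refine Finset.single_le_sum (f := fun h' : Hist K C D n =>
            if h'.visits G.T then G.playProb (dirac k) (G.beliefStrat G.AStar L) τ n h' else 0)
            (fun h' _ => ?_) (Finset.mem_univ h)
          split_ifs
          · exact G.playProb_nonneg _ _ _ _ _
          · exact le_refl 0
  have := G.reachProb_add_noTmass (dirac k) (G.beliefStrat G.AStar L) τ n
  have hanti := G.noTmass_antitone (dirac k) (G.beliefStrat G.AStar L) τ hnN
  linarith

/-- Soundness: a good initial support is almost-surely winning for player 1. -/
lemma soundness (δ : FDist K) (hδ : δ.support ∈ G.GoodSet) : G.AlmostSureWin1 δ := by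
  refine ⟨G.beliefStrat G.AStar δ.support, ?_⟩
  intro τ
  have key : ∀ m : ℕ, G.noTmass δ (G.beliefStrat G.AStar δ.support) τ (m * G.bigN)
      ≤ (1 - G.epsd) ^ m := by
    intro m
    induction m with
    | zero =>
      rw [zero_mul, pow_zero]
      exact G.noTmass_le_one _ _ _ _
    | succ m ih =>
      have hsplit := G.noTmass_glue δ (G.beliefStrat G.AStar δ.support) τ (m * G.bigN) G.bigN
      rw [show (m+1) * G.bigN = m * G.bigN + G.bigN by ring, hsplit]
      have hterm : ∀ h : Hist K C D (m * G.bigN),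
          (if h.visits G.T then 0
            else G.playProb δ (G.beliefStrat G.AStar δ.support) τ (m * G.bigN) h *
              G.noTmass (dirac h.last) (shifted (G.beliefStrat G.AStar δ.support) h.sig1)
                (shifted τ h.sig2) G.bigN)
          ≤ (if h.visits G.T then 0
            else G.playProb δ (G.beliefStrat G.AStar δ.support) τ (m * G.bigN) h * (1 - G.epsd)) := by
        intro h
        by_cases hv : h.visits G.T
        · rw [if_pos hv, if_pos hv]
        · rw [if_neg hv, if_neg hv]
          rcases lt_or_eq_of_le (G.playProb_nonneg δ (G.beliefStrat G.AStar δ.support) τ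
            (m * G.bigN) h) with hpp | hpp
          · apply mul_le_mul_of_nonneg_left _ (le_of_lt hpp)
            -- identify the shifted strategy
            rw [G.shifted_beliefStrat]
            set L' := G.B1pseq δ.support h.sig1 with hL'
            have hbel : L' ∈ G.GoodSet :=
              G.belief_closure G.validStruct_AStar hδ δ
                (fun x hx => (δ.mem_support x).2 hx) τ (m * G.bigN) h hpp hv
            have hlast : h.last ∈ L' := by
              have := G.state_mem_belief δ (G.beliefStrat G.AStar δ.support) τ
                (fun x hx => (δ.mem_support x).2 hx) (m * G.bigN) h hpp hv
                (Fin.last (m * G.bigN))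
              rw [Hist.state_last] at this
              have hfull : h.sig1.take (Fin.last (m * G.bigN)).val = h.sig1 := by
                apply List.take_of_length_le
                rw [Hist.sig1_length]
                exact le_refl _
              rwa [hfull] at this
            exact G.progress (shifted τ h.sig2) hbel hlast
              (Hist.last_not_mem_of_not_visits h hv)
          · rw [← hpp, zero_mul, zero_mul]
      calc (∑ h : Hist K C D (m * G.bigN), if h.visits G.T then 0
              else G.playProb δ (G.beliefStrat G.AStar δ.support) τ (m * G.bigN) h *
                G.noTmass (dirac h.last) (shifted (G.beliefStrat G.AStar δ.support) h.sig1)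
                  (shifted τ h.sig2) G.bigN)
          ≤ ∑ h : Hist K C D (m * G.bigN), (if h.visits G.T then 0
              else G.playProb δ (G.beliefStrat G.AStar δ.support) τ (m * G.bigN) h *
                (1 - G.epsd)) := Finset.sum_le_sum fun h _ => hterm h
        _ = (1 - G.epsd) * G.noTmass δ (G.beliefStrat G.AStar δ.support) τ (m * G.bigN) := by
            rw [noTmass, Finset.mul_sum]
            apply Finset.sum_congr rfl
            intro h _
            split_ifs
            · ring
            · ring
        _ ≤ (1 - G.epsd) ^ (m + 1) := by
            rw [pow_succ, mul_comm ((1 - G.epsd) ^ m) (1 - G.epsd)]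
            apply mul_le_mul_of_nonneg_left ih
            have := G.epsd_le_one
            linarith
  apply G.val_eq_one_of_noTmass
  intro ε hε
  have hlt : 1 - G.epsd < 1 := by have := G.epsd_pos; linarith
  have hge : 0 ≤ 1 - G.epsd := by have := G.epsd_le_one; linarith
  obtain ⟨m, hm⟩ := exists_pow_lt_of_lt_one hε hlt
  exact ⟨m * G.bigN, le_of_lt (lt_of_le_of_lt (key m) hm)⟩

end Game

end Aux7

section Aux8
set_option linter.unusedSectionVars false
set_option maxHeartbeats 1000000

/-- The uniformly random strategy of player 2. -/
def randomStrat2 : Strategy2 J D := fun _ => uniform Finset.univ Finset.univ_nonempty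

namespace Game

variable (G : Game K I J C D)

/-- A canonical safe pattern for given data, when one exists. -/
noncomputable def safePatFor (𝔄 : Finset K → Finset I) (L : Finset K) (k : K) :
    List D → Finset J :=
  if h : ∃ 𝔖 : List D → Finset J, G.SafePat 𝔄 L k 𝔖 then h.choose else fun _ => ∅

lemma safePatFor_spec {𝔄 : Finset K → Finset I} {L : Finset K} {k : K}
    (h : ∃ 𝔖 : List D → Finset J, G.SafePat 𝔄 L k 𝔖) :
    G.SafePat 𝔄 L k (G.safePatFor 𝔄 L k) := by
  rw [safePatFor, dif_pos h]
  exact h.choose_spec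

/-- The canonical countable family of strategies of player 2: play uniformly at random
for a while, then guess a situation and play the canonical safe pattern. -/
noncomputable def member (q : ℕ × ((Finset K → Finset I) × Finset K × K)) :
    Strategy2 J D := fun ds =>
  if ds.length < q.1 then uniform Finset.univ Finset.univ_nonempty
  else patStrat (G.safePatFor q.2.1 q.2.2.1 q.2.2.2) (ds.drop q.1)

lemma member_prefix (q : ℕ × ((Finset K → Finset I) × Finset K × K)) {ds : List D}
    (h : ds.length < q.1) (j : J) : 0 < (G.member q ds).f j := by
  rw [member, if_pos h]
  exact uniform_f_pos _ (Finset.mem_univ j)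

lemma member_shift (q : ℕ × ((Finset K → Finset I) × Finset K × K)) {pre : List D}
    (hpre : pre.length = q.1) :
    shifted (G.member q) pre = patStrat (G.safePatFor q.2.1 q.2.2.1 q.2.2.2) := by
  funext ds
  rw [shifted, member, if_neg (by rw [List.length_append, hpre]; omega)]
  congr 1
  rw [← hpre, List.drop_left]

/-- The collection of beliefs reachable under σ. -/
def sigW (δ : FDist K) (σ : Strategy1 I C) : Set (Finset K) :=
  {L | ∃ cs : List C, 0 < gList σ G.act₁ cs ∧ G.B1pseq δ.support cs = L ∧ L.Nonempty}

/-- The action-support structure of σ on reachable beliefs. -/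
def sigA (δ : FDist K) (σ : Strategy1 I C) : Finset K → Finset I := fun L =>
  Finset.univ.filter fun i =>
    ∃ cs : List C, 0 < gList σ G.act₁ cs ∧ G.B1pseq δ.support cs = L ∧ 0 < (σ cs).f i

lemma sig_valid (δ : FDist K) (σ : Strategy1 I C)
    (hprog : ∀ L ∈ G.sigW δ σ, ∀ k ∈ L, k ∉ G.T →
      ∀ 𝔖 : List D → Finset J, ¬ G.SafePat (G.sigA δ σ) L k 𝔖) :
    G.ValidStruct (G.sigW δ σ) (G.sigA δ σ) := by
  refine ⟨?_, ?_, hprog⟩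
  · rintro L ⟨cs, hg, hbel, hne⟩
    refine ⟨hne, ?_⟩
    obtain ⟨i, hi⟩ := (σ cs).exists_pos
    exact ⟨i, Finset.mem_filter.2 ⟨Finset.mem_univ _, cs, hg, hbel, hi⟩⟩
  · intro L hL i hi c hc
    rw [sigA, Finset.mem_filter] at hi
    obtain ⟨-, cs₁, hg₁, hbel₁, hσ₁⟩ := hi
    by_cases hne : (G.B1p L c).Nonempty
    · refine Or.inr ⟨cs₁ ++ [c], ?_, ?_, hne⟩
      · rw [gList_snoc]
        apply mul_pos hg₁
        rw [hc]
        exact hσ₁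
      · rw [B1pseq_snoc, hbel₁]
    · left
      rwa [Finset.not_nonempty_iff_eq_empty] at hne

lemma supp_mem_sigW (δ : FDist K) (σ : Strategy1 I C) : δ.support ∈ G.sigW δ σ :=
  ⟨[], by simp, rfl, δ.support_nonempty⟩

/-- If no visiting play has positive probability, the no-visit mass is one. -/
lemma noTmass_eq_one_of_safe (δ : FDist K) (σ : Strategy1 I C) (τ : Strategy2 J D)
    (hsafe : ∀ (n : ℕ) (h : Hist K C D n), 0 < G.playProb δ σ τ n h → ¬ h.visits G.T)
    (n : ℕ) : G.noTmass δ σ τ n = 1 := by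
  rw [noTmass, ← G.sum_playProb δ σ τ n]
  apply Finset.sum_congr rfl
  intro h _
  by_cases hv : h.visits G.T
  · rw [if_pos hv]
    rcases lt_or_eq_of_le (G.playProb_nonneg δ σ τ n h) with hp | hp
    · exact absurd hv (hsafe n h hp)
    · exact hp
  · rw [if_neg hv]

/-- The beater lemma: if the initial support is not good, then every strategy of
player 1 is beaten by some member of the canonical family. -/
lemma beater (δ : FDist K) (hδ : δ.support ∉ G.GoodSet) (σ : Strategy1 I C) :
    ∃ (q : ℕ × ((Finset K → Finset I) × Finset K × K)) (c : ℝ), 0 < c ∧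
      ∀ n : ℕ, c ≤ G.noTmass δ σ (G.member q) n := by
  -- the structure derived from σ cannot satisfy the progress condition
  have hnoprog : ¬ (∀ L ∈ G.sigW δ σ, ∀ k ∈ L, k ∉ G.T →
      ∀ 𝔖 : List D → Finset J, ¬ G.SafePat (G.sigA δ σ) L k 𝔖) := by
    intro hprog
    exact hδ ⟨G.sigW δ σ, G.sigA δ σ, G.sig_valid δ σ hprog, G.supp_mem_sigW δ σ⟩
  push_neg at hnoprog
  obtain ⟨L', hL', k, hk, hkT, 𝔖₀, h𝔖₀⟩ := hnoprog
  obtain ⟨cs', hg', hbel', hne'⟩ := hL'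
  set q : ℕ × ((Finset K → Finset I) × Finset K × K) :=
    (cs'.length, (G.sigA δ σ, L', k)) with hq
  have hexS : ∃ 𝔖 : List D → Finset J, G.SafePat (G.sigA δ σ) L' k 𝔖 := ⟨𝔖₀, h𝔖₀⟩
  have hSafe := G.safePatFor_spec hexS
  -- realize a positive play reaching k with signals cs', against the member strategy
  obtain ⟨n₀, h₀, hvis₀, hsig₀, hlast₀, hpos₀⟩ :=
    G.realize δ σ randomStrat2 (fun ds j => uniform_f_pos _ (Finset.mem_univ j)) cs' hg' k
      (by rw [hbel']; exact hk) hkT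
  have hn₀ : n₀ = cs'.length := by rw [← Hist.sig1_length h₀, hsig₀]
  have hpos₀' : 0 < G.playProb δ σ (G.member q) n₀ h₀ := by
    rw [G.playProb_congr_tau δ σ (G.member q) randomStrat2 n₀ h₀ ?_]
    · exact hpos₀
    · intro r hr
      rw [member, if_pos]
      · rfl
      · rw [List.length_take, Hist.sig2_length]
        have hq1 : q.1 = cs'.length := rfl
        omega
  refine ⟨q, G.playProb δ σ (G.member q) n₀ h₀, hpos₀', ?_⟩
  -- the continuation after h₀ is surely safe
  have hshift : shifted (G.member q) h₀.sig2 = patStrat (G.safePatFor (G.sigA δ σ) L' k) := by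
    apply G.member_shift
    rw [Hist.sig2_length, hn₀]
  have hcont : ∀ (m : ℕ) (h'' : Hist K C D m),
      0 < G.playProb (dirac h₀.last) (shifted σ h₀.sig1) (shifted (G.member q) h₀.sig2) m h'' →
      ¬ h''.visits G.T := by
    rw [hshift, hlast₀]
    intro m h''
    refine fun hp => (G.pos_transfer (dirac k) (shifted σ h₀.sig1)
      (G.beliefStrat (G.sigA δ σ) L') (patStrat (G.safePatFor (G.sigA δ σ) L' k))
      hSafe ?_ ?_ m h'' hp).2
    · intro h1 hp1
      exact hp1
    · intro n' h' x hvis' hpos₂ hpos₁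
      rw [G.playProb_extend] at hpos₁ ⊢
      apply mul_pos hpos₂
      have hfacs := (pos_pair (G.playProb_nonneg _ _ _ _ _)
        (mul_nonneg (mul_nonneg ((shifted σ h₀.sig1 _).nonneg _)
          ((patStrat (G.safePatFor (G.sigA δ σ) L' k) _).nonneg _)) (G.p_nonneg _ _ _ _))
        hpos₁)
      have hστp := pos_pair (mul_nonneg ((shifted σ h₀.sig1 _).nonneg _)
        ((patStrat (G.safePatFor (G.sigA δ σ) L' k) _).nonneg _)) (G.p_nonneg _ _ _ _) hfacs.2
      have hστ := pos_pair ((shifted σ h₀.sig1 _).nonneg _)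
        ((patStrat (G.safePatFor (G.sigA δ σ) L' k) _).nonneg _) hστp.1
      -- σ₁'s factor gives membership in sigA
      have hglist : 0 < gList (shifted σ h₀.sig1) G.act₁ h'.sig1 := by
        have := hfacs.1
        rw [G.playProb_factor] at this
        exact (pos_pair (mul_nonneg (G.F0'_nonneg _ _ _) (gList_nonneg _ _ _))
          (gList_nonneg _ _ _) this).1 |>
          fun hh => (pos_pair (G.F0'_nonneg _ _ _) (gList_nonneg _ _ _) hh).2
      have hgfull : 0 < gList σ G.act₁ (h₀.sig1 ++ h'.sig1) := by
        rw [gList_append]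
        apply mul_pos _ hglist
        rw [hsig₀]
        exact hg'
      have hmemA : G.act₁ x.1 ∈ G.sigA δ σ (G.B1pseq L' h'.sig1) := by
        rw [sigA, Finset.mem_filter]
        refine ⟨Finset.mem_univ _, h₀.sig1 ++ h'.sig1, hgfull, ?_, ?_⟩
        · rw [B1pseq_append, hsig₀, hbel']
        · have := hστ.1
          rw [shifted] at this
          exact this
      apply mul_pos (mul_pos _ hστ.2) hστp.2
      show 0 < (G.beliefStrat (G.sigA δ σ) L' h'.sig1).f (G.act₁ x.1)
      rw [beliefStrat]
      exact uniformD_f_pos_of_mem hmemA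
  -- lower bound on the no-visit mass at every horizon
  have hmain : ∀ m : ℕ,
      G.playProb δ σ (G.member q) n₀ h₀ ≤ G.noTmass δ σ (G.member q) (n₀ + m) := by
    intro m
    rw [G.noTmass_glue]
    calc G.playProb δ σ (G.member q) n₀ h₀
        = (if h₀.visits G.T then 0 else G.playProb δ σ (G.member q) n₀ h₀ *
            G.noTmass (dirac h₀.last) (shifted σ h₀.sig1) (shifted (G.member q) h₀.sig2) m) := by
          rw [if_neg hvis₀, G.noTmass_eq_one_of_safe _ _ _ hcont m, mul_one]
      _ ≤ _ := by
          refine Finset.single_le_sum (f := fun h : Hist K C D n₀ =>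
            if h.visits G.T then 0 else G.playProb δ σ (G.member q) n₀ h *
              G.noTmass (dirac h.last) (shifted σ h.sig1) (shifted (G.member q) h.sig2) m)
            (fun h _ => ?_) (Finset.mem_univ h₀)
          split_ifs
          · exact le_refl 0
          · exact mul_nonneg (G.playProb_nonneg _ _ _ _ _) (G.noTmass_nonneg _ _ _ _)
  intro n
  rcases Nat.lt_or_ge n n₀ with hlt | hge
  · exact le_trans (hmain 0) (G.noTmass_antitone _ _ _ (show n ≤ n₀ + 0 by omega))
  · obtain ⟨m, rfl⟩ : ∃ m, n = n₀ + m := ⟨n - n₀, by omega⟩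
    exact hmain m

end Game

end Aux8

section Aux9
set_option linter.unusedSectionVars false
set_option maxHeartbeats 1000000

/-- An enumeration of the canonical family's index set. -/
noncomputable def mixEquiv (K I : Type*) [Fintype K] [Fintype I] [Nonempty K] [Nonempty I] :
    (ℕ × ((Finset K → Finset I) × Finset K × K)) ≃ ℕ := by
  have h1 : Encodable (ℕ × ((Finset K → Finset I) × Finset K × K)) := Encodable.ofCountable _
  have h2 : Denumerable (ℕ × ((Finset K → Finset I) × Finset K × K)) :=
    Denumerable.ofEncodableOfInfinite _
  exact Denumerable.eqv _

/-- Weights for the countable mixture. -/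
noncomputable def mixW (K I : Type*) [Fintype K] [Fintype I] [Nonempty K] [Nonempty I] :
    (ℕ × ((Finset K → Finset I) × Finset K × K)) → ℝ :=
  fun q => ((1:ℝ)/2) ^ (mixEquiv K I q + 1)

lemma mixW_pos (q : ℕ × ((Finset K → Finset I) × Finset K × K)) : 0 < mixW K I q := by
  rw [mixW]; positivity

lemma summable_mixW : Summable (mixW K I) := by
  unfold mixW
  have h1 : Summable (fun n : ℕ => ((1:ℝ)/2) ^ (n + 1)) := by
    apply Summable.comp_injective summable_geometric_two
    exact add_left_injective 1
  exact ((mixEquiv K I).summable_iff.2 h1).congr (fun q => rfl)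

lemma tsum_mixW : ∑' q, mixW K I q = 1 := by
  unfold mixW
  rw [Equiv.tsum_eq (mixEquiv K I) (fun n => ((1:ℝ)/2) ^ (n + 1))]
  have h2 : ∀ n : ℕ, ((1:ℝ)/2) ^ (n+1) = (1/2) * (1/2)^n := fun n => by ring
  rw [tsum_congr h2, tsum_mul_left, tsum_geometric_two]
  ring

namespace Game

variable (G : Game K I J C D)

lemma playProb_le_one (δ : FDist K) (σ : Strategy1 I C) (τ : Strategy2 J D) (n : ℕ)
    (h : Hist K C D n) : G.playProb δ σ τ n h ≤ 1 := by
  have h1 := G.sum_playProb δ σ τ n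
  have h2 : G.playProb δ σ τ n h ≤ ∑ h' : Hist K C D n, G.playProb δ σ τ n h' :=
    Finset.single_le_sum (fun h' _ => G.playProb_nonneg δ σ τ n h') (Finset.mem_univ h)
  linarith

/-- The denominator of the behavioral mixture. -/
noncomputable def mixDen (ds : List D) : ℝ :=
  ∑' q, mixW K I q * gList (G.member q) G.act₂ ds

lemma summable_mixDen (ds : List D) :
    Summable fun q => mixW K I q * gList (G.member q) G.act₂ ds := by
  apply Summable.of_nonneg_of_le
    (fun q => mul_nonneg (le_of_lt (mixW_pos q)) (gList_nonneg _ _ _))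
    (fun q => ?_) summable_mixW
  calc mixW K I q * gList (G.member q) G.act₂ ds ≤ mixW K I q * 1 :=
        mul_le_mul_of_nonneg_left (gList_le_one _ _ _) (le_of_lt (mixW_pos q))
    _ = mixW K I q := mul_one _

lemma summable_mixNum (ds : List D) (j : J) :
    Summable fun q => mixW K I q * gList (G.member q) G.act₂ ds * ((G.member q) ds).f j := by
  apply Summable.of_nonneg_of_le
    (fun q => mul_nonneg (mul_nonneg (le_of_lt (mixW_pos q)) (gList_nonneg _ _ _))
      ((G.member q ds).nonneg _))
    (fun q => ?_) summable_mixW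
  calc mixW K I q * gList (G.member q) G.act₂ ds * ((G.member q) ds).f j
      ≤ mixW K I q * 1 * 1 := by
        apply mul_le_mul (mul_le_mul_of_nonneg_left (gList_le_one _ _ _)
          (le_of_lt (mixW_pos q))) ((G.member q ds).f_le_one j)
          ((G.member q ds).nonneg _)
        have := mixW_pos (K := K) (I := I) q
        linarith
    _ = mixW K I q := by ring

lemma mixDen_nonneg (ds : List D) : 0 ≤ G.mixDen ds :=
  tsum_nonneg fun q => mul_nonneg (le_of_lt (mixW_pos q)) (gList_nonneg _ _ _)

/-- The behavioral mixture of the canonical family. -/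
noncomputable def mixture : Strategy2 J D := fun ds =>
  if hden : 0 < G.mixDen ds then
    { f := fun j =>
        (∑' q, mixW K I q * gList (G.member q) G.act₂ ds * ((G.member q) ds).f j) / G.mixDen ds
      nonneg := fun j => by
        apply div_nonneg _ (le_of_lt hden)
        apply tsum_nonneg
        intro q
        exact mul_nonneg (mul_nonneg (le_of_lt (mixW_pos q)) (gList_nonneg _ _ _))
          ((G.member q ds).nonneg _)
      sum_one := by
        rw [← Finset.sum_div]
        rw [div_eq_one_iff_eq (ne_of_gt hden)]
        rw [← Summable.tsum_finsetSum (fun j _ => G.summable_mixNum ds j)]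
        rw [mixDen]
        apply tsum_congr
        intro q
        rw [← Finset.mul_sum, (G.member q ds).sum_one, mul_one] }
  else uniform Finset.univ Finset.univ_nonempty

lemma mixDen_zero_terms {ds : List D} (hz : ¬ 0 < G.mixDen ds) :
    ∀ q, gList (G.member q) G.act₂ ds = 0 := by
  have hden : G.mixDen ds = 0 := le_antisymm (by linarith [G.mixDen_nonneg ds]) (G.mixDen_nonneg ds)
  intro q
  by_contra hne
  have hpos : 0 < gList (G.member q) G.act₂ ds :=
    lt_of_le_of_ne (gList_nonneg _ _ _) (Ne.symm hne)
  have hterm : 0 < mixW K I q * gList (G.member q) G.act₂ ds := mul_pos (mixW_pos q) hpos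
  have hle : mixW K I q * gList (G.member q) G.act₂ ds ≤ G.mixDen ds := by
    apply Summable.le_tsum (G.summable_mixDen ds) q
    intro q' _
    exact mul_nonneg (le_of_lt (mixW_pos q')) (gList_nonneg _ _ _)
  rw [hden] at hle
  linarith

lemma gList_mixture : ∀ ds : List D, gList G.mixture G.act₂ ds = G.mixDen ds := by
  intro ds
  induction ds using List.reverseRecOn with
  | nil =>
    rw [gList_nil, mixDen]
    have : ∀ q, mixW K I q * gList (G.member q) G.act₂ [] = mixW K I q := fun q => by
      rw [gList_nil, mul_one]
    rw [tsum_congr this, tsum_mixW]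
  | append_singleton ds d ih =>
    rw [gList_snoc, ih]
    have hsnoc : ∀ q, gList (G.member q) G.act₂ (ds ++ [d])
        = gList (G.member q) G.act₂ ds * ((G.member q) ds).f (G.act₂ d) :=
      fun q => gList_snoc _ _ _ _
    by_cases hden : 0 < G.mixDen ds
    · rw [mixture]
      rw [dif_pos hden]
      show G.mixDen ds * (_ / G.mixDen ds) = _
      rw [mul_div_cancel₀ _ (ne_of_gt hden)]
      rw [mixDen]
      apply tsum_congr
      intro q
      rw [hsnoc q]
      ring
    · have hz := G.mixDen_zero_terms hden
      have h1 : G.mixDen ds = 0 :=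
        le_antisymm (by linarith [G.mixDen_nonneg ds]) (G.mixDen_nonneg ds)
      have h2 : G.mixDen (ds ++ [d]) = 0 := by
        rw [mixDen]
        have : ∀ q, mixW K I q * gList (G.member q) G.act₂ (ds ++ [d]) = 0 := fun q => by
          rw [hsnoc q, hz q, zero_mul, mul_zero]
        rw [tsum_congr this, tsum_zero]
      rw [h1, h2, zero_mul]

lemma playProb_mixture (δ : FDist K) (σ : Strategy1 I C) (n : ℕ) (h : Hist K C D n) :
    G.playProb δ σ G.mixture n h
      = ∑' q, mixW K I q * G.playProb δ σ (G.member q) n h := by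
  rw [G.playProb_factor, gList_mixture, mixDen, ← tsum_mul_left]
  apply tsum_congr
  intro q
  rw [G.playProb_factor δ σ (G.member q) n h]
  ring

lemma summable_noTmass_term (δ : FDist K) (σ : Strategy1 I C) (n : ℕ) :
    Summable fun q => mixW K I q * G.noTmass δ σ (G.member q) n := by
  apply Summable.of_nonneg_of_le
    (fun q => mul_nonneg (le_of_lt (mixW_pos q)) (G.noTmass_nonneg _ _ _ _))
    (fun q => ?_) summable_mixW
  calc mixW K I q * G.noTmass δ σ (G.member q) n ≤ mixW K I q * 1 :=
        mul_le_mul_of_nonneg_left (G.noTmass_le_one _ _ _ _) (le_of_lt (mixW_pos q))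
    _ = mixW K I q := mul_one _

lemma noTmass_mixture (δ : FDist K) (σ : Strategy1 I C) (n : ℕ) :
    G.noTmass δ σ G.mixture n = ∑' q, mixW K I q * G.noTmass δ σ (G.member q) n := by
  rw [noTmass]
  have hterm : ∀ h : Hist K C D n,
      (if h.visits G.T then 0 else G.playProb δ σ G.mixture n h)
        = ∑' q, (if h.visits G.T then 0
            else mixW K I q * G.playProb δ σ (G.member q) n h) := by
    intro h
    by_cases hv : h.visits G.T
    · rw [if_pos hv]
      have : ∀ q : ℕ × ((Finset K → Finset I) × Finset K × K),
          (if h.visits G.T then (0:ℝ)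
            else mixW K I q * G.playProb δ σ (G.member q) n h) = 0 := fun q => if_pos hv
      rw [tsum_congr this, tsum_zero]
    · rw [if_neg hv, G.playProb_mixture]
      apply tsum_congr
      intro q
      rw [if_neg hv]
  rw [Finset.sum_congr rfl (fun h _ => hterm h)]
  have hsummable : ∀ h : Hist K C D n, (h ∈ (Finset.univ : Finset (Hist K C D n))) → Summable
      fun q => (if h.visits G.T then (0:ℝ)
        else mixW K I q * G.playProb δ σ (G.member q) n h) := by
    intro h _
    by_cases hv : h.visits G.T
    · simp only [if_pos hv]
      exact summable_zero
    · simp only [if_neg hv]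
      apply Summable.of_nonneg_of_le
        (fun q => mul_nonneg (le_of_lt (mixW_pos q)) (G.playProb_nonneg _ _ _ _ _))
        (fun q => ?_) summable_mixW
      calc mixW K I q * G.playProb δ σ (G.member q) n h ≤ mixW K I q * 1 :=
            mul_le_mul_of_nonneg_left (G.playProb_le_one _ _ _ _ _) (le_of_lt (mixW_pos q))
        _ = mixW K I q := mul_one _
  rw [← Summable.tsum_finsetSum hsummable]
  apply tsum_congr
  intro q
  rw [noTmass, Finset.mul_sum]
  apply Finset.sum_congr rfl
  intro h _
  split_ifs
  · rw [mul_zero]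
  · rfl

/-- Completeness: a bad initial support is positively winning for player 2. -/
lemma completeness (δ : FDist K) (hδ : δ.support ∉ G.GoodSet) : G.PositiveWin2 δ := by
  refine ⟨G.mixture, ?_⟩
  intro σ
  obtain ⟨q₀, c, hc, hbound⟩ := G.beater δ hδ σ
  apply G.val_lt_one_of_noTmass δ σ G.mixture
    (show 0 < mixW K I q₀ * c from mul_pos (mixW_pos q₀) hc)
  intro n
  calc mixW K I q₀ * c ≤ mixW K I q₀ * G.noTmass δ σ (G.member q₀) n :=
        mul_le_mul_of_nonneg_left (hbound n) (le_of_lt (mixW_pos q₀))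
    _ ≤ ∑' q, mixW K I q * G.noTmass δ σ (G.member q) n := by
        apply Summable.le_tsum (G.summable_noTmass_term δ σ n) q₀
        intro q' _
        exact mul_nonneg (le_of_lt (mixW_pos q')) (G.noTmass_nonneg _ _ _ _)
    _ = G.noTmass δ σ G.mixture n := (G.noTmass_mixture δ σ n).symm

end Game

end Aux9
/-- every initial distribution is almost-surely winning for player 1
or positively winning for player 2, and not both. -/
theorem almostsure1_or_positive2 (G : Game K I J C D) (δ : FDist K) :
    (G.AlmostSureWin1 δ ∨ G.PositiveWin2 δ) ∧ ¬(G.AlmostSureWin1 δ ∧ G.PositiveWin2 δ) := by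
  constructor
  · by_cases hG : δ.support ∈ G.GoodSet
    · exact Or.inl (G.soundness δ hG)
    · exact Or.inr (G.completeness δ hG)
  · rintro ⟨⟨σ, hσ⟩, ⟨τ, hτ⟩⟩
    have h1 := hσ τ
    have h2 := hτ σ
    rw [h1] at h2
    exact absurd h2 (lt_irrefl 1)
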